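/- arXiv:1406.1574 — 16 statements merged into one kernel-verified Lean document; each statement's English description precedes it below -/
import Mathlib

section
/- If L is a perfect Lie algebra, then for every triple derivation D of L and every x ∈ L, the commutator [D, ad x] = D∘(ad x) − (ad x)∘D is an inner derivation of L; consequently ad(L) is an ideal of the Lie algebra of triple derivations TDer(L). -/
def IsTripleDer (R : Type*) {L : Type*} [CommRing R] [LieRing L] [LieAlgebra R L]
    (D : L →ₗ[R] L) : Prop :=
  ∀ x y z : L, D ⁅⁅x, y⁆, z⁆ = ⁅⁅D x, y⁆, z⁆ + ⁅⁅x, D y⁆, z⁆ + ⁅⁅x, y⁆, D z⁆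

/-- For a perfect Lie algebra `L`, the commutator of a triple derivation with an inner
derivation `ad x` is again inner; hence `ad L` is an ideal of `TDer L`. -/
theorem tripleDer_bracket_ad_isInner (R L : Type*) [CommRing R] [LieRing L] [LieAlgebra R L]
    (hperf : ⁅(⊤ : LieIdeal R L), (⊤ : LieIdeal R L)⁆ = ⊤)
    (D : L →ₗ[R] L) (hD : IsTripleDer R D) (x : L) :
    ∃ y : L, D ∘ₗ (LieAlgebra.ad R L x : L →ₗ[R] L) - (LieAlgebra.ad R L x : L →ₗ[R] L) ∘ₗ D
      = LieAlgebra.ad R L y := by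
  have hx : x ∈ Submodule.span R
      {m : L | ∃ a ∈ (⊤ : LieIdeal R L), ∃ b ∈ (⊤ : LieIdeal R L), ⁅a, b⁆ = m} := by
    rw [← LieSubmodule.lieIdeal_oper_eq_linear_span', hperf]
    exact Submodule.mem_top
  induction hx using Submodule.span_induction with
  | mem m hm =>
    obtain ⟨a, -, b, -, rfl⟩ := hm
    refine ⟨⁅D a, b⁆ + ⁅a, D b⁆, ?_⟩
    ext z
    have h := hD a b z
    simp only [LinearMap.sub_apply, LinearMap.comp_apply, LieAlgebra.ad_apply, h,
      add_lie]
    abel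
  | zero =>
    exact ⟨0, by ext z; simp⟩
  | add u v _ _ hu hv =>
    obtain ⟨yu, hyu⟩ := hu
    obtain ⟨yv, hyv⟩ := hv
    refine ⟨yu + yv, ?_⟩
    ext z
    have h1 := LinearMap.congr_fun hyu z
    have h2 := LinearMap.congr_fun hyv z
    simp only [LinearMap.sub_apply, LinearMap.comp_apply, LieAlgebra.ad_apply] at h1 h2 ⊢
    simp only [add_lie, lie_add, map_add, ← h1, ← h2]
    abel
  | smul r u _ hu =>
    obtain ⟨yu, hyu⟩ := hu
    refine ⟨r • yu, ?_⟩
    ext z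
    have h1 := LinearMap.congr_fun hyu z
    simp only [LinearMap.sub_apply, LinearMap.comp_apply, LieAlgebra.ad_apply] at h1 ⊢
    simp only [smul_lie, lie_smul, map_smul, ← h1, smul_sub]
end

section
/- Let L be a perfect Lie algebra with trivial center, and let D be a triple derivation of L. Then there is a well-defined R-linear map δ_D : L → L such that for every x ∈ L written as x = Σᵢ [x_{i1}, x_{i2}], one has δ_D(x) = Σᵢ ([D(x_{i1}), x_{i2}] + [x_{i1}, D(x_{i2})]); i.e., this value does not depend on the chosen expression of x as a sum of brackets. -/
/-- For a perfect centerless Lie algebra and a triple derivation `D`, there is a well-defined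
linear map `δ_D` with `δ_D (∑ ⁅aᵢ, bᵢ⁆) = ∑ (⁅D aᵢ, bᵢ⁆ + ⁅aᵢ, D bᵢ⁆)`. -/
theorem exists_deltaD (R L : Type*) [CommRing R] [LieRing L] [LieAlgebra R L]
    (hperf : ⁅(⊤ : LieIdeal R L), (⊤ : LieIdeal R L)⁆ = ⊤)
    (hZ : LieAlgebra.center R L = ⊥)
    (D : L →ₗ[R] L) (hD : IsTripleDer R D) :
    ∃ δ : L →ₗ[R] L, ∀ (x : L) (n : ℕ) (a b : Fin n → L),
      x = ∑ i, ⁅a i, b i⁆ →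
      δ x = ∑ i, (⁅D (a i), b i⁆ + ⁅a i, D (b i)⁆) := by
  classical
  -- The "graph" submodule
  set T : Set (L × L) := {p | ∃ a b : L, p = (⁅a, b⁆, ⁅D a, b⁆ + ⁅a, D b⁆)} with hT
  set S : Submodule R (L × L) := Submodule.span R T with hS
  -- key invariant on S
  have key : ∀ p ∈ S, ∀ z : L, ⁅p.2, z⁆ = D ⁅p.1, z⁆ - ⁅p.1, D z⁆ := by
    intro p hp
    induction hp using Submodule.span_induction with
    | mem p hp =>
      obtain ⟨a, b, rfl⟩ := hp
      intro z
      have := hD a b z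
      simp only [add_lie]
      rw [this]; abel
    | zero => intro z; simp
    | add p q _ _ hp hq =>
      intro z
      simp only [Prod.fst_add, Prod.snd_add, add_lie, map_add, lie_add]
      rw [hp z, hq z]; abel
    | smul c p _ hp =>
      intro z
      simp only [Prod.smul_fst, Prod.smul_snd, smul_lie, map_smul, lie_smul]
      rw [hp z, smul_sub]
  -- first projection restricted to S
  let f : S →ₗ[R] L := (LinearMap.fst R L L).comp S.subtype
  have hinj : Function.Injective f := by
    rw [← LinearMap.ker_eq_bot]
    rw [eq_bot_iff]
    rintro ⟨p, hp⟩ hker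
    have h1 : p.1 = 0 := hker
    have hcen : p.2 ∈ LieAlgebra.center R L := by
      intro z
      have := key p hp z
      rw [h1] at this
      simp only [zero_lie, map_zero, sub_zero] at this
      rw [← lie_skew, this, neg_zero]
    rw [hZ] at hcen
    have h2 : p.2 = 0 := hcen
    apply Subtype.ext
    exact Prod.ext h1 h2
  have hsurj : Function.Surjective f := by
    intro x
    -- brackets span L
    have hx : x ∈ Submodule.span R {m : L | ∃ a b : L, ⁅a, b⁆ = m} := by
      have h1 : x ∈ (⁅(⊤ : LieIdeal R L), (⊤ : LieIdeal R L)⁆ : LieIdeal R L) := by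
        rw [hperf]; trivial
      rw [← LieSubmodule.mem_toSubmodule, LieSubmodule.lieIdeal_oper_eq_linear_span'] at h1
      refine Submodule.span_mono ?_ h1
      rintro m ⟨a, -, b, -, rfl⟩
      exact ⟨a, b, rfl⟩
    -- show x is in the image of f, i.e. in map fst S
    have hmap : x ∈ Submodule.map (LinearMap.fst R L L) S := by
      rw [hS, Submodule.map_span]
      refine Submodule.span_mono ?_ hx
      rintro m ⟨a, b, rfl⟩
      exact ⟨(⁅a, b⁆, ⁅D a, b⁆ + ⁅a, D b⁆), ⟨a, b, rfl⟩, rfl⟩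
    obtain ⟨p, hp, hpx⟩ := hmap
    exact ⟨⟨p, hp⟩, hpx⟩
  let e : S ≃ₗ[R] L := LinearEquiv.ofBijective f ⟨hinj, hsurj⟩
  refine ⟨((LinearMap.snd R L L).comp S.subtype).comp (e.symm : L →ₗ[R] S), ?_⟩
  intro x n a b hx
  set y : L := ∑ i, (⁅D (a i), b i⁆ + ⁅a i, D (b i)⁆) with hy
  have hmem : (x, y) ∈ S := by
    rw [hx, hy]
    have : (∑ i, ⁅a i, b i⁆, ∑ i, (⁅D (a i), b i⁆ + ⁅a i, D (b i)⁆)) =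
        ∑ i, ((⁅a i, b i⁆, ⁅D (a i), b i⁆ + ⁅a i, D (b i)⁆) : L × L) :=
      prod_mk_sum _ _ _
    rw [this]
    exact Submodule.sum_mem _ fun i _ => Submodule.subset_span ⟨a i, b i, rfl⟩
  have hfe : e ⟨(x, y), hmem⟩ = x := rfl
  have heq : e.symm x = ⟨(x, y), hmem⟩ := e.symm_apply_eq.mpr hfe.symm
  rw [LinearMap.comp_apply, LinearMap.comp_apply, LinearEquiv.coe_coe, heq]
  rfl
end

section
/- Let L be a perfect Lie algebra with trivial center and D a triple derivation of L. Then the induced map δ_D (defined on brackets by δ_D([a,b]) = [D a, b] + [a, D b]) is a derivation of L. -/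
/-- For a perfect centerless Lie algebra and a triple derivation `D`, the induced map `δ_D`
(characterized by `[D, ad x] = ad (δ_D x)`) is a derivation of `L`. -/
theorem deltaD_isDer (R L : Type*) [CommRing R] [LieRing L] [LieAlgebra R L]
    (hperf : ⁅(⊤ : LieIdeal R L), (⊤ : LieIdeal R L)⁆ = ⊤)
    (hZ : LieAlgebra.center R L = ⊥)
    (D : L →ₗ[R] L) (hD : IsTripleDer R D)
    (δ : L →ₗ[R] L)
    (hδ : ∀ x : L, D ∘ₗ (LieAlgebra.ad R L x : L →ₗ[R] L)
        - (LieAlgebra.ad R L x : L →ₗ[R] L) ∘ₗ D = LieAlgebra.ad R L (δ x)) :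
    ∀ a b : L, δ ⁅a, b⁆ = ⁅δ a, b⁆ + ⁅a, δ b⁆ := by
  have key : ∀ x y : L, ⁅δ x, y⁆ = D ⁅x, y⁆ - ⁅x, D y⁆ := by
    intro x y
    have h := LinearMap.congr_fun (hδ x) y
    simpa [LieAlgebra.ad_apply] using h.symm
  intro a b
  have main : ∀ z : L, ⁅δ ⁅a, b⁆ - (⁅δ a, b⁆ + ⁅a, δ b⁆), z⁆ = 0 := by
    intro z
    have e1 : ⁅δ ⁅a, b⁆, z⁆ = ⁅⁅D a, b⁆, z⁆ + ⁅⁅a, D b⁆, z⁆ := by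
      rw [key ⁅a, b⁆ z, hD a b z]; abel
    have e2 : ⁅⁅δ a, b⁆, z⁆ + ⁅⁅a, δ b⁆, z⁆ = ⁅⁅D a, b⁆, z⁆ + ⁅⁅a, D b⁆, z⁆ := by
      rw [lie_lie (δ a) b z, lie_lie a (δ b) z, key a ⁅b, z⁆, key a z, key b ⁅a, z⁆,
        key b z]
      have hJ : (⁅a, ⁅b, z⁆⁆ : L) = ⁅⁅a, b⁆, z⁆ + ⁅b, ⁅a, z⁆⁆ := (leibniz_lie a b z).symm ▸ rfl
      rw [show D ⁅a, ⁅b, z⁆⁆ = D ⁅⁅a, b⁆, z⁆ + D ⁅b, ⁅a, z⁆⁆ by rw [← map_add, ← hJ]]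
      rw [hD a b z]
      simp only [lie_sub, sub_lie, lie_add, add_lie]
      rw [leibniz_lie a b (D z)]
      abel
    rw [sub_lie, add_lie, e1, ← e2]
    abel
  have hmem : δ ⁅a, b⁆ - (⁅δ a, b⁆ + ⁅a, δ b⁆) ∈ LieAlgebra.center R L := by
    intro z
    rw [← lie_skew, main z, neg_zero]
  rw [hZ] at hmem
  have h0 : δ ⁅a, b⁆ - (⁅δ a, b⁆ + ⁅a, δ b⁆) = 0 := by
    simpa using hmem
  exact sub_eq_zero.mp h0
end

section
/- Let L be a perfect Lie algebra over a commutative ring R in which 2 is invertible. Then the centralizer of ad(L) in the Lie algebra of triple derivations TDer(L) is zero: if D is a triple derivation with D∘(ad x) = (ad x)∘D for all x ∈ L, then D = 0. In particular, the center of TDer(L) is zero. -/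
/-- If `1/2 ∈ R` and `L` is perfect, then the centralizer of `ad L` in `TDer L` is zero. -/
theorem centralizer_ad_in_TDer_eq_zero (R L : Type*) [CommRing R] [LieRing L] [LieAlgebra R L]
    [Invertible (2 : R)]
    (hperf : ⁅(⊤ : LieIdeal R L), (⊤ : LieIdeal R L)⁆ = ⊤)
    (D : L →ₗ[R] L) (hD : IsTripleDer R D)
    (hcomm : ∀ x : L, D ∘ₗ (LieAlgebra.ad R L x : L →ₗ[R] L)
        = (LieAlgebra.ad R L x : L →ₗ[R] L) ∘ₗ D) :
    D = 0 := by
  have hc : ∀ a b : L, D ⁅a, b⁆ = ⁅a, D b⁆ := by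
    intro a b
    have := LinearMap.congr_fun (hcomm a) b
    simpa using this
  have hsym : ∀ a b : L, ⁅D a, b⁆ = ⁅a, D b⁆ := by
    intro a b
    have h2 : D ⁅b, a⁆ = ⁅b, D a⁆ := hc b a
    have h3 : ⁅b, a⁆ = -⁅a, b⁆ := (lie_skew b a).symm
    rw [h3, map_neg, hc a b] at h2
    rw [← lie_skew (D a) b, ← h2, neg_neg]
  have hzero : ∀ x y z : L, ⁅⁅x, D y⁆, z⁆ = 0 := by
    intro x y z
    have h := hD x y z
    rw [hc ⁅x, y⁆ z, hsym x y] at h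
    have h2 : (2 : R) • ⁅⁅x, D y⁆, z⁆ = 0 := by
      rw [two_smul]
      linear_combination (norm := abel) -h
    calc ⁅⁅x, D y⁆, z⁆ = ⅟(2 : R) • ((2 : R) • ⁅⁅x, D y⁆, z⁆) := by
          rw [smul_smul, invOf_mul_self, one_smul]
      _ = 0 := by rw [h2, smul_zero]
  have hadz : ∀ w z : L, ⁅D w, z⁆ = 0 := by
    intro w
    have hw0 : w ∈ ⁅(⊤ : LieIdeal R L), (⊤ : LieIdeal R L)⁆ := by rw [hperf]; trivial
    have hw : w ∈ Submodule.span R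
        {m | ∃ x ∈ (⊤ : LieIdeal R L), ∃ n ∈ (⊤ : LieIdeal R L), ⁅x, n⁆ = m} := by
      rw [← LieSubmodule.lieIdeal_oper_eq_linear_span']
      exact hw0
    refine Submodule.span_induction ?_ ?_ ?_ ?_ hw
    · rintro m ⟨x, -, y, -, rfl⟩ z
      rw [hc x y]
      exact hzero x y z
    · intro z; simp
    · intro a b _ _ ha hb z
      rw [map_add, add_lie, ha, hb, add_zero]
    · intro r a _ ha z
      rw [map_smul, smul_lie, ha, smul_zero]
  ext w
  have hw0 : w ∈ ⁅(⊤ : LieIdeal R L), (⊤ : LieIdeal R L)⁆ := by rw [hperf]; trivial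
  have hw : w ∈ Submodule.span R
      {m | ∃ x ∈ (⊤ : LieIdeal R L), ∃ n ∈ (⊤ : LieIdeal R L), ⁅x, n⁆ = m} := by
    rw [← LieSubmodule.lieIdeal_oper_eq_linear_span']
    exact hw0
  simp only [LinearMap.zero_apply]
  refine Submodule.span_induction ?_ ?_ ?_ ?_ hw
  · rintro m ⟨x, -, y, -, rfl⟩
    rw [hc x y, ← lie_skew x (D y), hadz y x, neg_zero]
  · simp
  · intro a b _ _ ha hb; rw [map_add, ha, hb, add_zero]
  · intro r a _ ha; rw [map_smul, ha, smul_zero]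
end

section
/- Let L be a Lie algebra over a commutative ring R containing 1/2, with [L,L] = L and Z(L) = 0. Then every triple derivation of L is a derivation, i.e., TDer(L) = Der(L). -/
section TDAux

variable {R L : Type*} [CommRing R] [LieRing L] [LieAlgebra R L]

private theorem tdFlip (m n : L) : ⁅m, n⁆ = -⁅n, m⁆ := (lie_skew m n).symm

/-- The derivation defect of `D`. -/
private def tdDelta (D : L →ₗ[R] L) (x y : L) : L :=
  D ⁅x, y⁆ - ⁅D x, y⁆ - ⁅x, D y⁆

private theorem tdDelta_skew (D : L →ₗ[R] L) (x y : L) :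
    tdDelta D x y = -tdDelta D y x := by
  unfold tdDelta
  rw [tdFlip y x, map_neg, tdFlip (D y) x, tdFlip y (D x)]
  abel

/-- Rule 2: `Δ ⁅p,q⁆ t = -⁅Δ p q, t⁆`. -/
private theorem tdDelta_rule2 (D : L →ₗ[R] L) (hD : IsTripleDer R D) (p q t : L) :
    tdDelta D ⁅p, q⁆ t = -⁅tdDelta D p q, t⁆ := by
  unfold tdDelta
  simp only [sub_lie]
  linear_combination (norm := abel) hD p q t

/-- The key relation. -/
private theorem tdDelta_key (D : L →ₗ[R] L) (hD : IsTripleDer R D) (x y z w : L) :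
    ⁅tdDelta D x y, ⁅z, w⁆⁆ = ⁅⁅x, y⁆, tdDelta D z w⁆ := by
  have h1 := hD x y ⁅z, w⁆
  have h2 := hD z w ⁅x, y⁆
  rw [tdFlip ⁅z, w⁆ ⁅x, y⁆, map_neg] at h2
  unfold tdDelta
  simp only [sub_lie, lie_sub]
  rw [tdFlip (D ⁅x, y⁆) ⁅z, w⁆, tdFlip ⁅x, y⁆ ⁅D z, w⁆, tdFlip ⁅x, y⁆ ⁅z, D w⁆]
  linear_combination (norm := abel) h1 + h2

end TDAux

/-- If `1/2 ∈ R`, `L` is perfect with zero center, then every triple derivation of `L`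
is a derivation: `TDer L = Der L`. -/
theorem tripleDer_eq_der (R L : Type*) [CommRing R] [LieRing L] [LieAlgebra R L]
    [Invertible (2 : R)]
    (hperf : ⁅(⊤ : LieIdeal R L), (⊤ : LieIdeal R L)⁆ = ⊤)
    (hZ : LieAlgebra.center R L = ⊥)
    (D : L →ₗ[R] L) (hD : IsTripleDer R D) :
    ∀ x y : L, D ⁅x, y⁆ = ⁅D x, y⁆ + ⁅x, D y⁆ := by
  have hc : ∀ m : L, (∀ z : L, ⁅m, z⁆ = 0) → m = 0 := by
    intro m hm
    have hmem : m ∈ LieAlgebra.center R L := by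
      rw [LieModule.mem_maxTrivSubmodule]
      intro x
      rw [tdFlip x m, hm x, neg_zero]
    rw [hZ] at hmem
    exact (LieSubmodule.mem_bot _).mp hmem
  have hspan : ∀ u : L,
      u ∈ Submodule.span R {m : L | ∃ (x : (⊤ : LieIdeal R L)) (n : (⊤ : LieIdeal R L)),
        ⁅(x : L), (n : L)⁆ = m} := by
    intro u
    have h := LieSubmodule.lieIdeal_oper_eq_linear_span (R := R) (L := L)
      (N := (⊤ : LieIdeal R L)) (I := (⊤ : LieIdeal R L))
    rw [hperf] at h
    rw [← h]
    simp
  have cent' : ∀ P : L, (∀ z w : L, ⁅P, ⁅z, w⁆⁆ = 0) → P = 0 := by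
    intro P hP
    apply hc
    intro u
    refine Submodule.span_induction ?_ ?_ ?_ ?_ (hspan u)
    · rintro m ⟨a, b, rfl⟩
      exact hP a b
    · exact lie_zero P
    · intro a b _ _ ha hb
      rw [lie_add, ha, hb, add_zero]
    · intro r a _ ha
      rw [lie_smul, ha, smul_zero]
  have key := tdDelta_key D hD
  have rule2 := tdDelta_rule2 D hD
  have skewΔ := tdDelta_skew D
  have jac : ∀ p q r : L,
      tdDelta D ⁅p, q⁆ r + tdDelta D ⁅q, r⁆ p + tdDelta D ⁅r, p⁆ q = 0 := by
    intro p q r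
    have hsum : ⁅⁅p, q⁆, r⁆ + ⁅⁅q, r⁆, p⁆ + ⁅⁅r, p⁆, q⁆ = 0 := by
      rw [tdFlip ⁅p, q⁆ r, tdFlip ⁅q, r⁆ p, tdFlip ⁅r, p⁆ q]
      linear_combination (norm := abel) -(lie_jacobi p q r)
    apply cent'
    intro z w
    rw [add_lie, add_lie, key ⁅p, q⁆ r z w, key ⁅q, r⁆ p z w, key ⁅r, p⁆ q z w,
      ← add_lie, ← add_lie, hsum, zero_lie]
  intro x y
  have main : tdDelta D x y = 0 := by
    have S1 : ∀ z u v : L, ⁅⁅tdDelta D x y, z⁆, ⁅u, v⁆⁆ = 0 := by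
      intro z u v
      -- the Jacobi-sum relation, rewritten
      have hj := jac ⁅x, y⁆ ⁅u, v⁆ z
      rw [rule2 ⁅x, y⁆ ⁅u, v⁆ z, rule2 ⁅u, v⁆ z ⁅x, y⁆, rule2 z ⁅x, y⁆ ⁅u, v⁆,
        rule2 x y ⁅u, v⁆, rule2 u v z, skewΔ z ⁅x, y⁆, rule2 x y z] at hj
      simp only [neg_neg, neg_lie, lie_neg] at hj
      -- the expansion of ⁅⁅C,z⁆,a⁆
      have hl : ⁅⁅tdDelta D u v, z⁆, ⁅x, y⁆⁆
          = ⁅tdDelta D u v, ⁅z, ⁅x, y⁆⁆⁆ - ⁅z, ⁅tdDelta D u v, ⁅x, y⁆⁆⁆ :=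
        lie_lie _ _ _
      have k1' : tdDelta D z ⁅x, y⁆ = ⁅tdDelta D x y, z⁆ := by
        rw [skewΔ z ⁅x, y⁆, rule2 x y z, neg_neg]
      rw [key u v z ⁅x, y⁆, k1', key u v x y,
        tdFlip ⁅u, v⁆ (tdDelta D x y), lie_neg, tdFlip z ⁅tdDelta D x y, ⁅u, v⁆⁆,
        tdFlip ⁅u, v⁆ ⁅tdDelta D x y, z⁆] at hl
      simp only [neg_neg] at hl
      -- combine: 2 • goal = 0
      have h2m : ⁅⁅tdDelta D x y, z⁆, ⁅u, v⁆⁆ + ⁅⁅tdDelta D x y, z⁆, ⁅u, v⁆⁆ = 0 := by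
        linear_combination (norm := abel) hl - hj
      have h2m' : (2 : R) • ⁅⁅tdDelta D x y, z⁆, ⁅u, v⁆⁆ = 0 := by
        rw [two_smul]; exact h2m
      have h3 := congrArg (fun t => (⅟(2 : R)) • t) h2m'
      simpa [smul_smul] using h3
    have S2 : ∀ z : L, ⁅tdDelta D x y, z⁆ = 0 := fun z => cent' _ (S1 z)
    exact hc _ S2
  have main' : D ⁅x, y⁆ - ⁅D x, y⁆ - ⁅x, D y⁆ = 0 := main
  linear_combination (norm := abel) main'
end

section
/- Let L be a perfect Lie algebra. If D is a triple derivation of the Lie algebra TDer(L) (triple derivations of L under the commutator bracket), then D maps ad(L) into ad(L). -/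
attribute [local instance 100] LieRing.ofAssociativeRing

/-- The triple derivations of a Lie algebra `L`, as a Lie subalgebra of `Module.End R L`
(with the commutator bracket). -/
def TDer (R L : Type*) [CommRing R] [LieRing L] [LieAlgebra R L] :
    LieSubalgebra R (Module.End R L) where
  carrier := {D | ∀ x y z : L, D ⁅⁅x, y⁆, z⁆ = ⁅⁅D x, y⁆, z⁆ + ⁅⁅x, D y⁆, z⁆ + ⁅⁅x, y⁆, D z⁆}
  add_mem' := by
    intro f g hf hg x y z
    simp only [LinearMap.add_apply, hf x y z, hg x y z, add_lie, lie_add]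
    abel
  zero_mem' := by intro x y z; simp
  smul_mem' := by
    intro c f hf x y z
    simp only [LinearMap.smul_apply, hf x y z, smul_add, lie_smul, smul_lie]
  lie_mem' := by
    intro f g hf hg x y z
    have hf' : ∀ x y z : L, f ⁅⁅x, y⁆, z⁆ = ⁅⁅f x, y⁆, z⁆ + ⁅⁅x, f y⁆, z⁆ + ⁅⁅x, y⁆, f z⁆ := hf
    have hg' : ∀ x y z : L, g ⁅⁅x, y⁆, z⁆ = ⁅⁅g x, y⁆, z⁆ + ⁅⁅x, g y⁆, z⁆ + ⁅⁅x, y⁆, g z⁆ := hg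
    simp only [Ring.lie_def, LinearMap.sub_apply, Module.End.mul_apply, hf', hg', map_add]
    simp only [add_lie, lie_add, sub_lie, lie_sub, smul_lie, lie_smul, neg_smul, one_smul,
      neg_lie, lie_neg]
    abel

theorem ad_mem_TDer (R L : Type*) [CommRing R] [LieRing L] [LieAlgebra R L] (a : L) :
    (LieAlgebra.ad R L a : Module.End R L) ∈ TDer R L := by
  intro x y z
  simp only [LieAlgebra.ad_apply]
  rw [leibniz_lie a ⁅x, y⁆ z, leibniz_lie a x y, add_lie]

def adT (R L : Type*) [CommRing R] [LieRing L] [LieAlgebra R L] : L →ₗ[R] ↥(TDer R L) :=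
  LinearMap.codRestrict (TDer R L).toSubmodule (LieAlgebra.ad R L).toLinearMap
    (fun x => ad_mem_TDer R L x)

theorem adT_lie (R L : Type*) [CommRing R] [LieRing L] [LieAlgebra R L] (u v : L) :
    adT R L ⁅u, v⁆ = ⁅adT R L u, adT R L v⁆ := by
  ext z
  exact congrFun (congrArg DFunLike.coe ((LieAlgebra.ad R L).map_lie u v)) z

theorem lie_adT_lie (R L : Type*) [CommRing R] [LieRing L] [LieAlgebra R L]
    (f : ↥(TDer R L)) (c d : L) :
    ⁅f, adT R L ⁅c, d⁆⁆ = adT R L (⁅(f : Module.End R L) c, d⁆ + ⁅c, (f : Module.End R L) d⁆) := by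
  ext z
  have hf := f.2 c d z
  show ((f : Module.End R L) * LieAlgebra.ad R L ⁅c, d⁆
      - LieAlgebra.ad R L ⁅c, d⁆ * (f : Module.End R L)) z
      = ⁅⁅(f : Module.End R L) c, d⁆ + ⁅c, (f : Module.End R L) d⁆, z⁆
  simp only [LinearMap.sub_apply, Module.End.mul_apply, LieAlgebra.ad_apply, hf, add_lie]
  abel

/-- A triple derivation of `TDer L` maps `ad L` into `ad L`, when `L` is perfect. -/
theorem tripleDer_of_TDer_maps_ad_into_ad (R L : Type*) [CommRing R] [LieRing L]
    [LieAlgebra R L]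
    (hperf : ⁅(⊤ : LieIdeal R L), (⊤ : LieIdeal R L)⁆ = ⊤)
    (D : ↥(TDer R L) →ₗ[R] ↥(TDer R L))
    (hD : ∀ d₁ d₂ d₃ : ↥(TDer R L),
      D ⁅⁅d₁, d₂⁆, d₃⁆ = ⁅⁅D d₁, d₂⁆, d₃⁆ + ⁅⁅d₁, D d₂⁆, d₃⁆ + ⁅⁅d₁, d₂⁆, D d₃⁆) :
    ∀ x : L, ∃ y : L,
      (↑(D ⟨LieAlgebra.ad R L x, ad_mem_TDer R L x⟩) : Module.End R L)
        = LieAlgebra.ad R L y := by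
  have hspan : ∀ a : L, a ∈ Submodule.span R {m : L | ∃ p q : L, ⁅p, q⁆ = m} := by
    intro a
    have h1 := LieSubmodule.lieIdeal_oper_eq_linear_span'
      (R := R) (L := L) (M := L) (I := ⊤) (N := (⊤ : LieIdeal R L))
    rw [hperf] at h1
    have ha : a ∈ Submodule.span R
        {m : L | ∃ x ∈ (⊤ : LieIdeal R L), ∃ n ∈ (⊤ : LieIdeal R L), ⁅x, n⁆ = m} := by
      rw [← h1]; exact trivial
    refine Submodule.span_mono ?_ ha
    rintro m ⟨p, -, q, -, rfl⟩
    exact ⟨p, q, rfl⟩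
  set S := LinearMap.range (adT R L) with hS
  have key : ∀ u v : L, D (adT R L ⁅u, v⁆) ∈ S := by
    intro u v
    refine Submodule.span_induction₂ (p := fun u v _ _ => D (adT R L ⁅u, v⁆) ∈ S)
      ?_ ?_ ?_ ?_ ?_ ?_ ?_ (hspan u) (hspan v)
    · rintro _ _ ⟨p, q, rfl⟩ ⟨c, d, rfl⟩
      rw [adT_lie R L ⁅p, q⁆ ⁅c, d⁆, adT_lie R L p q, hD]
      refine Submodule.add_mem _ (Submodule.add_mem _ ?_ ?_) ?_
      · rw [lie_adT_lie]; exact ⟨_, rfl⟩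
      · rw [lie_adT_lie]; exact ⟨_, rfl⟩
      · rw [← adT_lie R L p q, ← lie_skew, lie_adT_lie]
        exact Submodule.neg_mem _ ⟨_, rfl⟩
    · intro v _; simp only [zero_lie, map_zero]; exact Submodule.zero_mem _
    · intro u _; simp only [lie_zero, map_zero]; exact Submodule.zero_mem _
    · intro a b c _ _ _ h1 h2
      rw [add_lie, map_add, map_add]; exact Submodule.add_mem _ h1 h2
    · intro a b c _ _ _ h1 h2
      rw [lie_add, map_add, map_add]; exact Submodule.add_mem _ h1 h2
    · intro r a b _ _ h
      rw [smul_lie, map_smul, map_smul]; exact Submodule.smul_mem _ _ h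
    · intro r a b _ _ h
      rw [lie_smul, map_smul, map_smul]; exact Submodule.smul_mem _ _ h
  intro x
  have hx : D (adT R L x) ∈ S := by
    refine Submodule.span_induction (p := fun a _ => D (adT R L a) ∈ S) ?_ ?_ ?_ ?_ (hspan x)
    · rintro _ ⟨p, q, rfl⟩; exact key p q
    · simp only [map_zero]; exact Submodule.zero_mem _
    · intro a b _ _ ha hb; rw [map_add, map_add]; exact Submodule.add_mem _ ha hb
    · intro r a _ ha; rw [map_smul, map_smul]; exact Submodule.smul_mem _ _ ha
  obtain ⟨y, hy⟩ := hx
  refine ⟨y, ?_⟩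
  rw [show (⟨LieAlgebra.ad R L x, ad_mem_TDer R L x⟩ : ↥(TDer R L)) = adT R L x from rfl, ← hy]
  rfl
end

section
/- Let R contain 1/2 and L be a perfect Lie algebra over R with trivial center. If D is a triple derivation of TDer(L) such that D vanishes on ad(L), then D = 0. -/
private lemma perfect_induction (R L : Type*) [CommRing R] [LieRing L] [LieAlgebra R L]
    (hperf : ⁅(⊤ : LieIdeal R L), (⊤ : LieIdeal R L)⁆ = ⊤)
    (p : L → Prop) (h0 : p 0) (hadd : ∀ x y, p x → p y → p (x + y))
    (hsmul : ∀ (r : R) (x : L), p x → p (r • x)) (hbr : ∀ x y : L, p ⁅x, y⁆) (w : L) : p w := by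
  have hw : w ∈ (⁅(⊤ : LieIdeal R L), (⊤ : LieIdeal R L)⁆ : LieIdeal R L) := by
    rw [hperf]; exact LieSubmodule.mem_top _
  rw [← LieSubmodule.mem_toSubmodule, LieSubmodule.lieIdeal_oper_eq_linear_span] at hw
  refine Submodule.span_induction ?_ h0 (fun x y _ _ hx hy => hadd x y hx hy)
    (fun r x _ hx => hsmul r x hx) hw
  rintro m ⟨x, n, rfl⟩
  exact hbr x n



attribute [local instance 100] LieRing.ofAssociativeRing

/-- If `1/2 ∈ R`, `L` is perfect with trivial center, and a triple derivation `D` of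
`TDer L` vanishes on `ad L`, then `D = 0`. -/
theorem tripleDer_of_TDer_vanishing_on_ad (R L : Type*) [CommRing R] [LieRing L]
    [LieAlgebra R L] [Invertible (2 : R)]
    (hperf : ⁅(⊤ : LieIdeal R L), (⊤ : LieIdeal R L)⁆ = ⊤)
    (hZ : LieAlgebra.center R L = ⊥)
    (D : ↥(TDer R L) →ₗ[R] ↥(TDer R L))
    (hD : ∀ d₁ d₂ d₃ : ↥(TDer R L),
      D ⁅⁅d₁, d₂⁆, d₃⁆ = ⁅⁅D d₁, d₂⁆, d₃⁆ + ⁅⁅d₁, D d₂⁆, d₃⁆ + ⁅⁅d₁, d₂⁆, D d₃⁆)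
    (hvanish : ∀ x : L, D ⟨LieAlgebra.ad R L x, ad_mem_TDer R L x⟩ = 0) :
    D = 0 := by
  set adT : L → ↥(TDer R L) := fun a => ⟨LieAlgebra.ad R L a, ad_mem_TDer R L a⟩ with hadT
  refine LinearMap.ext fun d => ?_
  set E : Module.End R L := ((D d : ↥(TDer R L)) : Module.End R L) with hEdef
  have hd : ∀ x y z : L, (d : Module.End R L) ⁅⁅x, y⁆, z⁆ =
      ⁅⁅(d : Module.End R L) x, y⁆, z⁆ + ⁅⁅x, (d : Module.End R L) y⁆, z⁆ +
        ⁅⁅x, y⁆, (d : Module.End R L) z⁆ := d.2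
  have hE : ∀ x y z : L, E ⁅⁅x, y⁆, z⁆ =
      ⁅⁅E x, y⁆, z⁆ + ⁅⁅x, E y⁆, z⁆ + ⁅⁅x, y⁆, E z⁆ := (D d).2
  -- Step 1: ⁅⁅adT a, adT b⁆, d⁆ lies in the image of adT
  have step1 : ∀ a b : L, ⁅⁅adT a, adT b⁆, d⁆ =
      adT (-(⁅(d : Module.End R L) a, b⁆ + ⁅a, (d : Module.End R L) b⁆)) := by
    intro a b
    apply Subtype.ext
    ext z
    simp only [hadT, LieSubalgebra.coe_bracket, Ring.lie_def, LinearMap.sub_apply,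
      Module.End.mul_apply, LieAlgebra.ad_apply]
    have e2 : (d : Module.End R L) (⁅a, ⁅b, z⁆⁆ - ⁅b, ⁅a, z⁆⁆) =
        ⁅⁅(d : Module.End R L) a, b⁆, z⁆ + ⁅⁅a, (d : Module.End R L) b⁆, z⁆ +
          ⁅⁅a, b⁆, (d : Module.End R L) z⁆ := by
      rw [← lie_lie]; exact hd a b z
    rw [e2, ← lie_lie a b ((d : Module.End R L) z)]
    simp only [neg_add_rev, add_lie, neg_lie]
    abel
  -- Step 2: E commutes with ad of brackets
  have key : ∀ a b z : L, E ⁅⁅a, b⁆, z⁆ = ⁅⁅a, b⁆, E z⁆ := by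
    intro a b z
    have h1 := hD (adT a) (adT b) d
    rw [step1 a b, hvanish, hvanish, hvanish] at h1
    simp only [zero_lie, lie_zero, zero_add] at h1
    have h2 := congrArg (fun f : ↥(TDer R L) => ((f : Module.End R L) z)) h1.symm
    simp only [LieSubalgebra.coe_bracket, Ring.lie_def, LinearMap.sub_apply,
      Module.End.mul_apply, LieAlgebra.ad_apply, ZeroMemClass.coe_zero,
      LinearMap.zero_apply, hadT] at h2
    -- h2 : ⁅a,⁅b,E z⁆⁆ - ⁅b,⁅a,E z⁆⁆ - E (⁅a,⁅b,z⁆⁆ - ⁅b,⁅a,z⁆⁆) = 0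
    calc E ⁅⁅a, b⁆, z⁆ = E (⁅a, ⁅b, z⁆⁆ - ⁅b, ⁅a, z⁆⁆) := by rw [lie_lie]
      _ = ⁅a, ⁅b, E z⁆⁆ - ⁅b, ⁅a, E z⁆⁆ := (sub_eq_zero.mp h2).symm
      _ = ⁅⁅a, b⁆, E z⁆ := (lie_lie a b (E z)).symm
  -- Step 3: E commutes with all ad
  have hcomm : ∀ w z : L, E ⁅w, z⁆ = ⁅w, E z⁆ := by
    intro w
    refine perfect_induction R L hperf (fun w => ∀ z, E ⁅w, z⁆ = ⁅w, E z⁆) ?_ ?_ ?_ ?_ w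
    · intro z; simp
    · intro x y hx hy z; rw [add_lie, map_add, hx, hy, add_lie]
    · intro r x hx z; rw [smul_lie, map_smul, hx, smul_lie]
    · exact key
  -- Step 4: E kills all brackets
  have hbr0 : ∀ a b : L, E ⁅a, b⁆ = 0 := by
    intro a b
    have h1 : E ⁅a, b⁆ = ⁅a, E b⁆ := hcomm a b
    have h2 : E ⁅a, b⁆ = ⁅E a, b⁆ := by
      have hba := hcomm b a
      calc E ⁅a, b⁆ = -E ⁅b, a⁆ := by rw [← map_neg, lie_skew]
        _ = -⁅b, E a⁆ := by rw [hba]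
        _ = ⁅E a, b⁆ := lie_skew _ _
    have hz : ∀ z : L, ⁅E ⁅a, b⁆, z⁆ = 0 := by
      intro z
      have h3 := hE a b z
      rw [hcomm ⁅a, b⁆ z, ← h2, ← h1] at h3
      have h6 : ⁅E ⁅a, b⁆, z⁆ + ⁅E ⁅a, b⁆, z⁆ = 0 := right_eq_add.mp h3
      have h5 : (2 : R) • ⁅E ⁅a, b⁆, z⁆ = 0 := by rw [two_smul]; exact h6
      calc ⁅E ⁅a, b⁆, z⁆ = ⅟(2 : R) • ((2 : R) • ⁅E ⁅a, b⁆, z⁆) := by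
            rw [smul_smul, invOf_mul_self, one_smul]
        _ = 0 := by rw [h5, smul_zero]
    have hcen : E ⁅a, b⁆ ∈ LieAlgebra.center R L := by
      refine LieModule.mem_maxTrivSubmodule R L L _ |>.mpr fun z => ?_
      rw [← lie_skew, hz, neg_zero]
    rwa [hZ, LieSubmodule.mem_bot] at hcen
  -- Step 5: conclude
  have hE0 : ∀ w : L, E w = 0 :=
    perfect_induction R L hperf (fun w => E w = 0) (map_zero E)
      (fun x y hx hy => by show E (x + y) = 0; rw [map_add, hx, hy, add_zero])
      (fun r x hx => by show E (r • x) = 0; rw [map_smul, hx, smul_zero]) hbr0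
  show D d = (0 : ↥(TDer R L) →ₗ[R] ↥(TDer R L)) d
  rw [LinearMap.zero_apply]
  apply Subtype.ext
  apply LinearMap.ext
  intro w
  simpa using hE0 w
end

section
/- Let R contain 1/2 and L be a perfect Lie algebra over R with trivial center. If D is a triple derivation of the derivation algebra Der(L), then there exists a derivation d ∈ Der(L) such that D(ad x) = ad(d x) for all x ∈ L. -/
section Aux

variable {R L : Type*} [CommRing R] [LieRing L] [LieAlgebra R L]

/-- The derivation defect of a linear map. -/
def Edf (f : L →ₗ[R] L) (x y : L) : L := f ⁅x, y⁆ - ⁅f x, y⁆ - ⁅x, f y⁆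

lemma Edf_skew (f : L →ₗ[R] L) (x y : L) : Edf f x y = - Edf f y x := by
  have h1 : ⁅y, x⁆ = -⁅x, y⁆ := (neg_eq_iff_eq_neg.mp (lie_skew x y)).symm ▸ rfl
  simp only [Edf]
  rw [show ⁅y, x⁆ = -⁅x, y⁆ from by rw [← lie_skew]]
  rw [map_neg]
  rw [show ⁅f y, x⁆ = -⁅x, f y⁆ from by rw [← lie_skew]]
  rw [show ⁅y, f x⁆ = -⁅f x, y⁆ from by rw [← lie_skew]]
  abel

lemma Edf_C (f : L →ₗ[R] L) (x y z : L) :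
    ⁅Edf f x y, z⁆ - ⁅x, Edf f y z⁆ + ⁅y, Edf f x z⁆
      = Edf f x ⁅y, z⁆ - Edf f ⁅x, y⁆ z - Edf f y ⁅x, z⁆ := by
  simp only [Edf, lie_lie, map_sub, map_add, lie_sub, sub_lie, lie_add, add_lie]
  abel

variable (f : L →ₗ[R] L)
  (hR1 : ∀ a b c : L, f ⁅⁅a, b⁆, c⁆ = ⁅⁅f a, b⁆, c⁆ + ⁅⁅a, f b⁆, c⁆ + ⁅⁅a, b⁆, f c⁆)

include hR1

lemma Edf_II (x p q : L) : Edf f x ⁅p, q⁆ = -⁅x, Edf f p q⁆ := by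
  have hx : f ⁅x, ⁅p, q⁆⁆ = - f ⁅⁅p, q⁆, x⁆ := by
    rw [← map_neg]; congr 1; rw [← lie_skew]
  have h := hR1 p q x
  simp only [Edf, hx, h, lie_sub]
  rw [show ⁅⁅f p, q⁆, x⁆ = -⁅x, ⁅f p, q⁆⁆ from by rw [← lie_skew]]
  rw [show ⁅⁅p, f q⁆, x⁆ = -⁅x, ⁅p, f q⁆⁆ from by rw [← lie_skew]]
  rw [show ⁅⁅p, q⁆, f x⁆ = -⁅f x, ⁅p, q⁆⁆ from by rw [← lie_skew]]
  abel

lemma Edf_III (p q y z : L) : ⁅Edf f p q, ⁅y, z⁆⁆ = ⁅⁅p, q⁆, Edf f y z⁆ := by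
  have h1 : ⁅Edf f p q, ⁅y, z⁆⁆ = - ⁅⁅y, z⁆, Edf f p q⁆ := by rw [← lie_skew]
  have h2 : Edf f ⁅y, z⁆ ⁅p, q⁆ = -⁅⁅y, z⁆, Edf f p q⁆ := Edf_II f hR1 _ _ _
  have h3 : Edf f ⁅y, z⁆ ⁅p, q⁆ = - Edf f ⁅p, q⁆ ⁅y, z⁆ := Edf_skew f _ _
  have h4 : Edf f ⁅p, q⁆ ⁅y, z⁆ = -⁅⁅p, q⁆, Edf f y z⁆ := Edf_II f hR1 _ _ _
  rw [h1, ← h2, h3, h4, neg_neg]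

end Aux

/-- If `1/2 ∈ R` and `L` is perfect with trivial center, then every triple derivation `D` of
the derivation algebra `Der L` satisfies `D (ad x) = ad (d x)` for some derivation `d`. -/
theorem tripleDer_of_Der_ad (R L : Type*) [CommRing R] [LieRing L] [LieAlgebra R L]
    [Invertible (2 : R)]
    (hperf : ⁅(⊤ : LieIdeal R L), (⊤ : LieIdeal R L)⁆ = ⊤)
    (hZ : LieAlgebra.center R L = ⊥)
    (D : LieDerivation R L L →ₗ[R] LieDerivation R L L)
    (hD : ∀ d₁ d₂ d₃ : LieDerivation R L L,
      D ⁅⁅d₁, d₂⁆, d₃⁆ = ⁅⁅D d₁, d₂⁆, d₃⁆ + ⁅⁅d₁, D d₂⁆, d₃⁆ + ⁅⁅d₁, d₂⁆, D d₃⁆) :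
    ∃ d : LieDerivation R L L, ∀ x : L,
      D (LieDerivation.ad R L x) = LieDerivation.ad R L (d x) := by
  classical
  set ad := LieDerivation.ad R L with had
  -- spanning principle from perfectness
  have key : ∀ N : Submodule R L, (∀ a b : L, ⁅a, b⁆ ∈ N) → ∀ x : L, x ∈ N := by
    intro N hN x
    have hx : x ∈ Submodule.span R
        { m : L | ∃ (u : (⊤ : LieIdeal R L)) (v : (⊤ : LieIdeal R L)),
          ⁅(u : L), (v : L)⁆ = m } := by
      rw [← LieSubmodule.lieIdeal_oper_eq_linear_span, hperf]
      simp [LieSubmodule.mem_toSubmodule]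
    refine Submodule.span_le.mpr ?_ hx
    rintro m ⟨u, v, rfl⟩
    exact hN u v
  have hinj : Function.Injective ad := by
    rw [had]; exact LieDerivation.injective_ad_of_center_eq_bot hZ
  set Aₗ : L →ₗ[R] LieDerivation R L L := (ad : L →ₗ⁅R⁆ LieDerivation R L L).toLinearMap
    with hAl
  have hAx : ∀ x : L, Aₗ x = ad x := fun _ => rfl
  have hinjl : Function.Injective Aₗ := hinj
  -- Step 1: D (ad [[a,b],c]) lies in the range of ad
  have h3 : ∀ a b c : L, D (ad ⁅⁅a, b⁆, c⁆) ∈ LinearMap.range Aₗ := by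
    intro a b c
    have h := hD (ad a) (ad b) (ad c)
    simp only [← LieHom.map_lie] at h
    rw [h]
    refine Submodule.add_mem _ (Submodule.add_mem _ ?_ ?_) ?_
    · rw [LieDerivation.lie_der_ad_eq_ad_der]; exact ⟨_, rfl⟩
    · rw [LieDerivation.lie_der_ad_eq_ad_der]; exact ⟨_, rfl⟩
    · rw [show (⁅ad ⁅a, b⁆, D (ad c)⁆ : LieDerivation R L L)
          = -⁅D (ad c), ad ⁅a, b⁆⁆ from by rw [← lie_skew]]
      rw [LieDerivation.lie_der_ad_eq_ad_der]
      exact Submodule.neg_mem _ ⟨_, rfl⟩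
  -- Step 2: D (ad x) lies in the range of ad, for all x
  have hmem : ∀ x : L, D (ad x) ∈ LinearMap.range Aₗ := by
    have h1 : ∀ c x : L, D (ad ⁅x, c⁆) ∈ LinearMap.range Aₗ := by
      intro c
      have := key (Submodule.comap
        ((D.comp Aₗ).comp (-(LieAlgebra.ad R L c))) (LinearMap.range Aₗ))
        (by
          intro a b
          simp only [Submodule.mem_comap, LinearMap.comp_apply, LinearMap.neg_apply,
            LieAlgebra.ad_apply]
          rw [show -⁅c, ⁅a, b⁆⁆ = ⁅⁅a, b⁆, c⁆ from lie_skew _ _]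
          exact h3 a b c)
      intro x
      have hx := Submodule.mem_comap.mp (this x)
      simp only [LinearMap.comp_apply, LinearMap.neg_apply, LieAlgebra.ad_apply] at hx
      rwa [show -⁅c, x⁆ = ⁅x, c⁆ from lie_skew _ _] at hx
    have := key (Submodule.comap (D.comp Aₗ) (LinearMap.range Aₗ))
      (fun a b => Submodule.mem_comap.mpr (by rw [LinearMap.comp_apply]; exact h1 b a))
    intro x
    have hx := Submodule.mem_comap.mp (this x)
    rwa [LinearMap.comp_apply] at hx
  -- Step 3: construct the linear map d
  set dl : L →ₗ[R] L :=
    (LinearEquiv.ofInjective Aₗ hinjl).symm.toLinearMap ∘ₗ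
      LinearMap.codRestrict (LinearMap.range Aₗ) (D ∘ₗ Aₗ) hmem
    with hdl
  have hd' : ∀ x : L, ad (dl x) = D (ad x) := by
    intro x
    have h := LinearEquiv.ofInjective_symm_apply
      (f := Aₗ) (h := hinjl) (LinearMap.codRestrict (LinearMap.range Aₗ) (D ∘ₗ Aₗ) hmem x)
    rw [LinearMap.codRestrict_apply, LinearMap.comp_apply] at h
    exact h
  -- Step 4: the key identity R1
  have R1 : ∀ a b c : L,
      dl ⁅⁅a, b⁆, c⁆ = ⁅⁅dl a, b⁆, c⁆ + ⁅⁅a, dl b⁆, c⁆ + ⁅⁅a, b⁆, dl c⁆ := by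
    intro a b c
    apply hinj
    have h := hD (ad a) (ad b) (ad c)
    simp only [← LieHom.map_lie] at h
    simp only [← hd'] at h
    simp only [← LieHom.map_lie] at h
    rw [← map_add, ← map_add] at h
    exact h
  -- Step 5: show S = 0
  have hS : ∀ x y z : L,
      ⁅Edf dl x y, z⁆ - ⁅x, Edf dl y z⁆ + ⁅y, Edf dl x z⁆ = 0 := by
    intro x y z
    set S : L := ⁅Edf dl x y, z⁆ - ⁅x, Edf dl y z⁆ + ⁅y, Edf dl x z⁆ with hSdef
    have hbr : ∀ a b : L, ⁅S, ⁅a, b⁆⁆ = 0 := by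
      intro a b
      rw [hSdef, Edf_C]
      rw [sub_lie, sub_lie]
      rw [Edf_III dl R1, Edf_III dl R1, Edf_III dl R1]
      rw [← sub_lie, ← sub_lie]
      rw [show ⁅x, ⁅y, z⁆⁆ - ⁅⁅x, y⁆, z⁆ - ⁅y, ⁅x, z⁆⁆ = 0 from by
        rw [lie_lie]; abel]
      exact zero_lie _
    have hall : ∀ w : L, ⁅S, w⁆ = 0 := by
      have := key (LinearMap.ker (LieAlgebra.ad R L S))
        (by intro a b; simp [LinearMap.mem_ker, LieAlgebra.ad_apply, hbr a b])
      intro w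
      have hw := this w
      simpa [LinearMap.mem_ker, LieAlgebra.ad_apply] using hw
    have hc : S ∈ LieAlgebra.center R L := by
      rw [LieModule.mem_maxTrivSubmodule]
      intro w
      rw [← lie_skew, hall w, neg_zero]
    rw [hZ] at hc
    exact (LieSubmodule.mem_bot _).mp hc
  -- Step 6: the defect vanishes
  have hEc : ∀ a b : L, Edf dl a b = 0 := by
    intro a b
    set c : L := Edf dl a b with hcdef
    have hbr2 : ∀ x y : L, ⁅⁅x, y⁆, c⁆ = 0 := by
      intro x y
      have h0 := hS x y ⁅a, b⁆
      rw [Edf_II dl R1, Edf_II dl R1, Edf_III dl R1] at h0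
      rw [lie_neg, lie_neg, sub_neg_eq_add] at h0
      have h0' : ⁅⁅x, y⁆, c⁆ + (⁅x, ⁅y, c⁆⁆ - ⁅y, ⁅x, c⁆⁆) = 0 := by
        rw [← h0]; abel
      rw [← lie_lie] at h0'
      have h2v : (2 : R) • ⁅⁅x, y⁆, c⁆ = 0 := by
        rw [two_smul]; exact h0'
      have := congrArg (fun v => ⅟(2 : R) • v) h2v
      simpa [invOf_smul_smul] using this
    have hall2 : ∀ w : L, ⁅c, w⁆ = 0 := by
      have := key (LinearMap.ker (LieAlgebra.ad R L c))
        (by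
          intro u v
          simp only [LinearMap.mem_ker, LieAlgebra.ad_apply]
          rw [show ⁅c, ⁅u, v⁆⁆ = -⁅⁅u, v⁆, c⁆ from by rw [← lie_skew]]
          rw [hbr2 u v, neg_zero])
      intro w
      have hw := this w
      simpa [LinearMap.mem_ker, LieAlgebra.ad_apply] using hw
    have hc : c ∈ LieAlgebra.center R L := by
      rw [LieModule.mem_maxTrivSubmodule]
      intro w
      rw [← lie_skew, hall2 w, neg_zero]
    rw [hZ] at hc
    exact (LieSubmodule.mem_bot _).mp hc
  -- Conclusion
  refine ⟨⟨dl, ?_⟩, ?_⟩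
  · intro a b
    have h := hEc a b
    rw [Edf] at h
    have h' : dl ⁅a, b⁆ = ⁅dl a, b⁆ + ⁅a, dl b⁆ := by
      rw [← sub_eq_zero]; rw [← h]; abel
    rw [show ⁅dl a, b⁆ = -⁅b, dl a⁆ from by rw [← lie_skew]] at h'
    simpa [sub_eq_add_neg, add_comm] using h'
  · intro x
    exact (hd' x).symm
end

section
/- Let R contain 1/2 and L be a perfect Lie algebra over R with trivial center. Then every triple derivation of Der(L) is an inner derivation of Der(L): TDer(Der(L)) = ad(Der(L)). -/
section Aux

variable {R L : Type*} [CommRing R] [LieRing L] [LieAlgebra R L]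

/-- The "derivation defect" of a linear map. -/
private def phiAux (δ : L →ₗ[R] L) (x y : L) : L := δ ⁅x, y⁆ - ⁅δ x, y⁆ - ⁅x, δ y⁆

private lemma phiAux_skew (δ : L →ₗ[R] L) (x y : L) : phiAux δ x y = - phiAux δ y x := by
  have h : ⁅x, y⁆ = -⁅y, x⁆ := (lie_skew x y).symm
  simp only [phiAux, h, map_neg]
  rw [← lie_skew (δ y) x, ← lie_skew y (δ x)]
  abel

private lemma phiAux_neg_left (δ : L →ₗ[R] L) (x y : L) :
    phiAux δ (-x) y = - phiAux δ x y := by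
  simp only [phiAux, neg_lie, map_neg, lie_neg, map_neg]
  abel

private lemma phiAux_add_left (δ : L →ₗ[R] L) (x x' y : L) :
    phiAux δ (x + x') y = phiAux δ x y + phiAux δ x' y := by
  simp only [phiAux, add_lie, map_add]
  abel

/-- Key lemma: a triple derivation of a perfect, centerless Lie algebra (with `1/2 ∈ R`)
is a derivation. -/
private lemma tripleDer_is_der [Invertible (2 : R)]
    (hspan : ∀ z : L, z ∈ Submodule.span R {m : L | ∃ x y : L, ⁅x, y⁆ = m})
    (hZ' : ∀ a : L, (∀ z : L, ⁅a, z⁆ = 0) → a = 0)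
    (δ : L →ₗ[R] L)
    (hδ : ∀ x y z : L,
      δ ⁅⁅x, y⁆, z⁆ = ⁅⁅δ x, y⁆, z⁆ + ⁅⁅x, δ y⁆, z⁆ + ⁅⁅x, y⁆, δ z⁆) :
    ∀ x y : L, δ ⁅x, y⁆ = ⁅δ x, y⁆ + ⁅x, δ y⁆ := by
  -- notation
  set Φ : L → L → L := phiAux δ with hΦdef
  -- star identity
  have hstar : ∀ x y z : L, ⁅Φ x y, z⁆ = - Φ ⁅x, y⁆ z := by
    intro x y z
    simp only [hΦdef, phiAux, sub_lie, hδ x y z]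
    abel
  have hstar2 : ∀ a x y : L, Φ a ⁅x, y⁆ = ⁅Φ x y, a⁆ := by
    intro a x y
    rw [hΦdef, phiAux_skew, ← hΦdef, hstar]
  -- the "D'" identity
  have hD' : ∀ x y z : L, ⁅Φ x y, z⁆ = ⁅Φ x z, y⁆ - ⁅Φ y z, x⁆ := by
    intro x y z
    have key : ∀ w : L, ⁅⁅Φ x y, z⁆ - (⁅Φ x z, y⁆ - ⁅Φ y z, x⁆), w⁆ = 0 := by
      intro w
      have e1 : ⁅⁅Φ x y, z⁆, w⁆ = Φ ⁅⁅x, y⁆, z⁆ w := by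
        rw [hstar x y z, neg_lie, hstar ⁅x, y⁆ z w]; simp
      have e2 : ⁅⁅Φ x z, y⁆, w⁆ = Φ ⁅⁅x, z⁆, y⁆ w := by
        rw [hstar x z y, neg_lie, hstar ⁅x, z⁆ y w]; simp
      have e3 : ⁅⁅Φ y z, x⁆, w⁆ = Φ ⁅⁅y, z⁆, x⁆ w := by
        rw [hstar y z x, neg_lie, hstar ⁅y, z⁆ x w]; simp
      have jac : ⁅⁅x, y⁆, z⁆ = ⁅⁅x, z⁆, y⁆ + (- ⁅⁅y, z⁆, x⁆) := by
        rw [lie_lie x y z, ← lie_skew x ⁅y, z⁆, ← lie_skew y ⁅x, z⁆]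
        abel
      have e4 : Φ ⁅⁅x, y⁆, z⁆ w = Φ ⁅⁅x, z⁆, y⁆ w - Φ ⁅⁅y, z⁆, x⁆ w := by
        rw [jac, hΦdef, phiAux_add_left, phiAux_neg_left]
        abel
      rw [sub_lie, sub_lie, e1, e2, e3, e4]
      abel
    have := hZ' _ (key)
    rw [sub_eq_zero] at this
    exact this
  -- symmetry relation
  have hsym : ∀ x y u v : L, ⁅Φ x y, ⁅u, v⁆⁆ = ⁅Φ u v, ⁅x, y⁆⁆ := by
    intro x y u v
    have lhs : ⁅Φ x y, ⁅u, v⁆⁆ = ⁅⁅Φ x y, u⁆, v⁆ - ⁅⁅Φ x y, v⁆, u⁆ := by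
      rw [leibniz_lie (Φ x y) u v, ← lie_skew u ⁅Φ x y, v⁆]
      abel
    have rhs : ⁅Φ u v, ⁅x, y⁆⁆ = ⁅Φ u ⁅x, y⁆, v⁆ - ⁅Φ v ⁅x, y⁆, u⁆ := hD' u v ⁅x, y⁆
    rw [lhs, rhs, hstar2 u x y, hstar2 v x y]
  -- antisymmetry relation
  have hanti : ∀ x y u v : L, ⁅Φ x y, ⁅u, v⁆⁆ = - ⁅Φ u v, ⁅x, y⁆⁆ := by
    intro x y u v
    rw [hstar x y ⁅u, v⁆, hstar2 ⁅x, y⁆ u v]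
  -- conclude vanishing on brackets
  have hbr : ∀ x y u v : L, ⁅Φ x y, ⁅u, v⁆⁆ = 0 := by
    intro x y u v
    have h2 : ⁅Φ x y, ⁅u, v⁆⁆ + ⁅Φ x y, ⁅u, v⁆⁆ = 0 := by
      nth_rewrite 1 [hanti x y u v]
      rw [hsym x y u v]
      abel
    have h3 : (2 : R) • ⁅Φ x y, ⁅u, v⁆⁆ = 0 := by rw [two_smul]; exact h2
    calc ⁅Φ x y, ⁅u, v⁆⁆ = (⅟(2:R) * 2) • ⁅Φ x y, ⁅u, v⁆⁆ := by rw [invOf_mul_self]; simp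
      _ = ⅟(2:R) • ((2:R) • ⁅Φ x y, ⁅u, v⁆⁆) := by rw [mul_smul]
      _ = 0 := by rw [h3, smul_zero]
  -- Φ lies in the center, hence vanishes
  have hΦ0 : ∀ x y : L, Φ x y = 0 := by
    intro x y
    apply hZ'
    intro z
    have hz := hspan z
    induction hz using Submodule.span_induction with
    | mem m hm => obtain ⟨u, v, rfl⟩ := hm; exact hbr x y u v
    | zero => simp
    | add a b _ _ ha hb => rw [lie_add, ha, hb, add_zero]
    | smul r a _ ha => rw [lie_smul, ha, smul_zero]
  intro x y
  have := hΦ0 x y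
  rw [hΦdef, phiAux, sub_sub, sub_eq_zero] at this
  exact this

end Aux

/-- If `1/2 ∈ R` and `L` is perfect with trivial center, then every triple derivation of the
derivation algebra `Der L` is an inner derivation: `TDer (Der L) = ad (Der L)`. -/
theorem tripleDer_of_Der_is_inner (R L : Type*) [CommRing R] [LieRing L] [LieAlgebra R L]
    [Invertible (2 : R)]
    (hperf : ⁅(⊤ : LieIdeal R L), (⊤ : LieIdeal R L)⁆ = ⊤)
    (hZ : LieAlgebra.center R L = ⊥)
    (D : LieDerivation R L L →ₗ[R] LieDerivation R L L)
    (hD : ∀ d₁ d₂ d₃ : LieDerivation R L L,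
      D ⁅⁅d₁, d₂⁆, d₃⁆ = ⁅⁅D d₁, d₂⁆, d₃⁆ + ⁅⁅d₁, D d₂⁆, d₃⁆ + ⁅⁅d₁, d₂⁆, D d₃⁆) :
    ∃ d : LieDerivation R L L, ∀ e : LieDerivation R L L, D e = ⁅d, e⁆ := by
  classical
  -- trivial center, elementwise
  have hZ' : ∀ a : L, (∀ z : L, ⁅a, z⁆ = 0) → a = 0 := by
    intro a ha
    have hmem : a ∈ LieAlgebra.center R L := by
      rw [LieModule.mem_maxTrivSubmodule]
      intro x
      rw [← lie_skew, ha x, neg_zero]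
    rw [hZ, LieSubmodule.mem_bot] at hmem
    exact hmem
  -- perfectness, as a span statement
  have hspan : ∀ z : L, z ∈ Submodule.span R {m : L | ∃ x y : L, ⁅x, y⁆ = m} := by
    intro z
    have hz : z ∈ (⊤ : LieIdeal R L) := trivial
    rw [← hperf] at hz
    rw [← LieSubmodule.mem_toSubmodule, LieSubmodule.lieIdeal_oper_eq_linear_span'] at hz
    refine Submodule.span_mono ?_ hz
    rintro m ⟨x, -, y, -, rfl⟩
    exact ⟨x, y, rfl⟩
  -- double-bracket span
  have hspan2 : ∀ z : L,
      z ∈ Submodule.span R {m : L | ∃ u v w : L, ⁅⁅u, v⁆, w⁆ = m} := by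
    intro z
    have hz := hspan z
    induction hz using Submodule.span_induction with
    | mem m hm =>
      obtain ⟨x, y, rfl⟩ := hm
      have hx := hspan x
      induction hx using Submodule.span_induction with
      | mem n hn =>
        obtain ⟨u, v, rfl⟩ := hn
        exact Submodule.subset_span ⟨u, v, y, rfl⟩
      | zero => rw [zero_lie]; exact Submodule.zero_mem _
      | add a b _ _ ha hb => rw [add_lie]; exact Submodule.add_mem _ ha hb
      | smul r a _ ha => rw [smul_lie]; exact Submodule.smul_mem _ r ha
    | zero => exact Submodule.zero_mem _
    | add a b _ _ ha hb => exact Submodule.add_mem _ ha hb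
    | smul r a _ ha => exact Submodule.smul_mem _ r ha
  -- notation for the adjoint action
  have adinj : Function.Injective (LieDerivation.ad R L) :=
    LieDerivation.injective_ad_of_center_eq_bot hZ
  have adlie : ∀ x y : L,
      LieDerivation.ad R L ⁅x, y⁆ = ⁅LieDerivation.ad R L x, LieDerivation.ad R L y⁆ :=
    fun x y => LieHom.map_lie _ x y
  have had3 : ∀ (p : L) (f : LieDerivation R L L),
      ⁅LieDerivation.ad R L p, f⁆ = LieDerivation.ad R L (-(f p)) := by
    intro p f
    rw [map_neg (LieDerivation.ad R L), ← LieDerivation.lie_der_ad_eq_ad_der f p,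
      ← neg_neg ⁅LieDerivation.ad R L p, f⁆, lie_skew]
  -- D maps ad L to ad L
  have hDad : ∀ x : L, ∃ w : L, D (LieDerivation.ad R L x) = LieDerivation.ad R L w := by
    intro x
    have hx := hspan2 x
    induction hx using Submodule.span_induction with
    | mem m hm =>
      obtain ⟨u, v, w, rfl⟩ := hm
      refine ⟨⁅(D (LieDerivation.ad R L u)) v, w⁆
        + ⁅-((D (LieDerivation.ad R L v)) u), w⁆
        + (-((D (LieDerivation.ad R L w)) ⁅u, v⁆)), ?_⟩
      rw [adlie ⁅u, v⁆ w, adlie u v, hD]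
      rw [LieDerivation.lie_der_ad_eq_ad_der (D (LieDerivation.ad R L u)) v,
        had3 u (D (LieDerivation.ad R L v)), ← adlie u v,
        had3 ⁅u, v⁆ (D (LieDerivation.ad R L w)),
        ← adlie ((D (LieDerivation.ad R L u)) v) w,
        ← adlie (-((D (LieDerivation.ad R L v)) u)) w,
        ← map_add (LieDerivation.ad R L), ← map_add (LieDerivation.ad R L)]
    | zero => exact ⟨0, by simp⟩
    | add a b _ _ ha hb =>
      obtain ⟨w₁, hw₁⟩ := ha; obtain ⟨w₂, hw₂⟩ := hb
      exact ⟨w₁ + w₂, by rw [map_add (LieDerivation.ad R L), map_add, hw₁, hw₂, map_add (LieDerivation.ad R L)]⟩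
    | smul r a _ ha =>
      obtain ⟨w₁, hw₁⟩ := ha
      exact ⟨r • w₁, by rw [map_smul (LieDerivation.ad R L), map_smul, hw₁, map_smul (LieDerivation.ad R L)]⟩
  -- define δ
  let δ₀ : L → L := fun x => Classical.choose (hDad x)
  have hδ₀ : ∀ x : L, D (LieDerivation.ad R L x) = LieDerivation.ad R L (δ₀ x) :=
    fun x => Classical.choose_spec (hDad x)
  have hδadd : ∀ x y : L, δ₀ (x + y) = δ₀ x + δ₀ y := by
    intro x y
    apply adinj
    rw [← hδ₀, map_add (LieDerivation.ad R L), map_add (LieDerivation.ad R L), map_add, hδ₀, hδ₀]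
  have hδsmul : ∀ (r : R) (x : L), δ₀ (r • x) = r • δ₀ x := by
    intro r x
    apply adinj
    rw [← hδ₀, map_smul (LieDerivation.ad R L), map_smul (LieDerivation.ad R L), map_smul, hδ₀]
  let δ : L →ₗ[R] L :=
    { toFun := δ₀, map_add' := hδadd, map_smul' := hδsmul }
  have hδ₀' : ∀ x : L, D (LieDerivation.ad R L x) = LieDerivation.ad R L (δ x) := hδ₀
  -- δ is a triple derivation of L
  have hδtriple : ∀ x y z : L,
      δ ⁅⁅x, y⁆, z⁆ = ⁅⁅δ x, y⁆, z⁆ + ⁅⁅x, δ y⁆, z⁆ + ⁅⁅x, y⁆, δ z⁆ := by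
    intro x y z
    apply adinj
    rw [← hδ₀', adlie ⁅x, y⁆ z, adlie x y, hD]
    rw [map_add (LieDerivation.ad R L), map_add (LieDerivation.ad R L), adlie ⁅δ x, y⁆ z, adlie (δ x) y,
      adlie ⁅x, δ y⁆ z, adlie x (δ y), adlie ⁅x, y⁆ (δ z), adlie x y]
    rw [hδ₀' x, hδ₀' y, hδ₀' z]
  -- hence a derivation
  have hleib : ∀ x y : L, δ ⁅x, y⁆ = ⁅δ x, y⁆ + ⁅x, δ y⁆ :=
    tripleDer_is_der hspan hZ' δ hδtriple
  -- bundle δ as a Lie derivation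
  let d : LieDerivation R L L :=
    { toLinearMap := δ
      leibniz' := by
        intro a b
        have := hleib a b
        rw [this, ← lie_skew b (δ a)]
        abel }
  have hdδ : ∀ x : L, d x = δ x := fun _ => rfl
  have hdx : ∀ x : L, D (LieDerivation.ad R L x) = ⁅d, LieDerivation.ad R L x⁆ := by
    intro x
    rw [hδ₀' x, ← hdδ x, ← LieDerivation.lie_der_ad_eq_ad_der d x]
  refine ⟨d, fun e => ?_⟩
  apply LieDerivation.ext
  intro x
  -- show the difference vanishes
  have key : ∀ y : L, ⁅(D e) x - (⁅d, e⁆ : LieDerivation R L L) x, y⁆ = 0 := by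
    intro y
    -- Jacobi at the Der level
    have jac : ⁅d, ⁅⁅e, LieDerivation.ad R L x⁆, LieDerivation.ad R L y⁆⁆
        = ⁅⁅⁅d, e⁆, LieDerivation.ad R L x⁆, LieDerivation.ad R L y⁆
          + ⁅⁅e, ⁅d, LieDerivation.ad R L x⁆⁆, LieDerivation.ad R L y⁆
          + ⁅⁅e, LieDerivation.ad R L x⁆, ⁅d, LieDerivation.ad R L y⁆⁆ := by
      rw [leibniz_lie d ⁅e, LieDerivation.ad R L x⁆ (LieDerivation.ad R L y)]
      rw [leibniz_lie d e (LieDerivation.ad R L x)]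
      rw [add_lie]
    have e2 : ⁅⁅e, LieDerivation.ad R L x⁆, LieDerivation.ad R L y⁆
        = LieDerivation.ad R L ⁅e x, y⁆ := by
      rw [LieDerivation.lie_der_ad_eq_ad_der e x, ← adlie]
    have e1 := hD e (LieDerivation.ad R L x) (LieDerivation.ad R L y)
    rw [hdx x, hdx y] at e1
    have lhs : D ⁅⁅e, LieDerivation.ad R L x⁆, LieDerivation.ad R L y⁆
        = ⁅d, ⁅⁅e, LieDerivation.ad R L x⁆, LieDerivation.ad R L y⁆⁆ := by
      rw [e2, hdx ⁅e x, y⁆, ← e2]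
    rw [lhs, jac] at e1
    have e3 : ⁅⁅D e - ⁅d, e⁆, LieDerivation.ad R L x⁆, LieDerivation.ad R L y⁆ = 0 := by
      rw [sub_lie, sub_lie, sub_eq_zero]
      -- e1 : A + B + C = A' + B + C  where A = ⁅⁅⁅d,e⁆,adx⁆,ady⁆, A' = ⁅⁅De,adx⁆,ady⁆
      exact (add_right_cancel (add_right_cancel e1)).symm
    have e4 : ⁅D e - ⁅d, e⁆, LieDerivation.ad R L x⁆
        = LieDerivation.ad R L ((D e - ⁅d, e⁆) x) :=
      LieDerivation.lie_der_ad_eq_ad_der (D e - ⁅d, e⁆) x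
    rw [e4, ← adlie] at e3
    have e5 : ⁅(D e - ⁅d, e⁆ : LieDerivation R L L) x, y⁆ = 0 := by
      apply adinj
      rw [e3, map_zero (LieDerivation.ad R L)]
    rw [LieDerivation.sub_apply] at e5
    exact e5
  have := hZ' _ key
  rw [sub_eq_zero] at this
  exact this
end

section
/- Over a field of characteristic 2, the identity map of any non-abelian Lie algebra L is a triple derivation of L but not a derivation. -/
def IsDer (R : Type*) {L : Type*} [CommRing R] [LieRing L] [LieAlgebra R L]
    (D : L →ₗ[R] L) : Prop :=
  ∀ x y : L, D ⁅x, y⁆ = ⁅D x, y⁆ + ⁅x, D y⁆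

/-- Over a field of characteristic 2, the identity map of a non-abelian Lie algebra is a
triple derivation but not a derivation. -/
theorem id_tripleDer_not_der_char_two (F L : Type*) [Field F] [CharP F 2]
    [LieRing L] [LieAlgebra F L]
    (hnonab : ∃ x y : L, ⁅x, y⁆ ≠ 0) :
    IsTripleDer F (LinearMap.id : L →ₗ[F] L) ∧ ¬ IsDer F (LinearMap.id : L →ₗ[F] L) := by
  have h2 : ∀ v : L, v + v = 0 := by
    intro v
    have : (2 : F) • v = 0 := by
      rw [show (2 : F) = 0 from CharTwo.two_eq_zero, zero_smul]
    rwa [two_smul] at this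
  constructor
  · intro x y z
    simp only [LinearMap.id_coe, id_eq]
    rw [show ⁅⁅x,y⁆,z⁆ + ⁅⁅x,y⁆,z⁆ + ⁅⁅x,y⁆,z⁆ = (⁅⁅x,y⁆,z⁆ + ⁅⁅x,y⁆,z⁆) + ⁅⁅x,y⁆,z⁆ by ring,
      h2, zero_add]
  · rintro hD
    obtain ⟨x, y, hxy⟩ := hnonab
    have := hD x y
    simp only [LinearMap.id_coe, id_eq] at this
    rw [h2 ⁅x,y⁆] at this
    exact hxy this
end

section
/- Let f : L → L' be a triple homomorphism with L perfect and the enveloping Lie subalgebra M of f(L) centerless. Then there is a well-defined R-linear map δ_f : L → L' such that for every x ∈ L written as x = Σᵢ [x_{i1}, x_{i2}], one has δ_f(x) = Σᵢ [f(x_{i1}), f(x_{i2})]; i.e., the value is independent of the chosen expression of x. -/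
open TensorProduct

/-- For a triple homomorphism `f` of a perfect Lie algebra `L` whose enveloping algebra `M`
is centerless, there is a well-defined linear map `δ_f` with
`δ_f (∑ ⁅aᵢ, bᵢ⁆) = ∑ ⁅f aᵢ, f bᵢ⁆`. -/
theorem exists_deltaF (R L L' : Type*) [CommRing R]
    [LieRing L] [LieAlgebra R L] [LieRing L'] [LieAlgebra R L']
    (f : L →ₗ[R] L')
    (hf : ∀ x y z : L, f ⁅x, ⁅y, z⁆⁆ = ⁅f x, ⁅f y, f z⁆⁆)
    (hperf : ⁅(⊤ : LieIdeal R L), (⊤ : LieIdeal R L)⁆ = ⊤)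
    (hZ : LieAlgebra.center R ↥(LieSubalgebra.lieSpan R L' (Set.range f)) = ⊥) :
    ∃ δ : L →ₗ[R] L', ∀ (x : L) (n : ℕ) (a b : Fin n → L),
      x = ∑ i, ⁅a i, b i⁆ → δ x = ∑ i, ⁅f (a i), f (b i)⁆ := by
  classical
  set M := LieSubalgebra.lieSpan R L' (Set.range f) with hM
  -- the bracket as a linear map on the tensor square
  let mbil : L →ₗ[R] L →ₗ[R] L :=
    LinearMap.mk₂ R (fun x y => ⁅x, y⁆) add_lie smul_lie lie_add lie_smul
  let m : L ⊗[R] L →ₗ[R] L := TensorProduct.lift mbil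
  let gbil : L →ₗ[R] L →ₗ[R] L' :=
    LinearMap.mk₂ R (fun x y => ⁅f x, f y⁆)
      (by intro x y z; simp [add_lie]) (by intro c x y; simp [smul_lie])
      (by intro x y z; simp [lie_add]) (by intro c x y; simp [lie_smul])
  let g : L ⊗[R] L →ₗ[R] L' := TensorProduct.lift gbil
  -- m is surjective, by perfection
  have hsurj : Function.Surjective m := by
    intro x
    have hx : x ∈ Submodule.span R { m | ∃ y ∈ (⊤ : LieIdeal R L), ∃ z ∈ (⊤ : LieIdeal R L), ⁅y, z⁆ = m } := by
      rw [← LieSubmodule.lieIdeal_oper_eq_linear_span', LieSubmodule.mem_toSubmodule, hperf]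
      exact LieSubmodule.mem_top x
    have : x ∈ LinearMap.range m := by
      refine Submodule.span_le.mpr ?_ hx
      rintro _ ⟨y, -, z, -, rfl⟩
      exact ⟨y ⊗ₜ z, by simp [m, mbil]⟩
    obtain ⟨t, ht⟩ := this
    exact ⟨t, ht⟩
  -- g maps into M
  have hgM : ∀ t, g t ∈ M := by
    intro t
    induction t using TensorProduct.induction_on with
    | zero => simp [M.zero_mem]
    | tmul x y =>
        have hx : f x ∈ M := LieSubalgebra.subset_lieSpan ⟨x, rfl⟩
        have hy : f y ∈ M := LieSubalgebra.subset_lieSpan ⟨y, rfl⟩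
        simpa [g, gbil] using M.lie_mem hx hy
    | add t₁ t₂ h₁ h₂ => simpa [map_add] using M.add_mem h₁ h₂
  -- key: ker m ≤ ker g
  have hker : ∀ t, m t = 0 → g t = 0 := by
    intro t hmt
    -- ⁅f z, g t⁆ = f ⁅z, m t⁆ for all z
    have key : ∀ z : L, ⁅f z, g t⁆ = 0 := by
      intro z
      have heq : ∀ s : L ⊗[R] L,
          ⁅f z, g s⁆ = f ⁅z, m s⁆ := by
        intro s
        induction s using TensorProduct.induction_on with
        | zero => simp
        | tmul x y => simp [g, gbil, m, mbil, hf]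
        | add s₁ s₂ h₁ h₂ => simp [map_add, lie_add, h₁, h₂]
      rw [heq t, hmt]; simp
    -- hence g t commutes with everything in M
    have hcomm : ∀ y ∈ M, ⁅y, g t⁆ = 0 := by
      intro y hy
      let C : LieSubalgebra R L' :=
        { carrier := {y | ⁅y, g t⁆ = 0}
          add_mem' := fun {a b} ha hb => by
            simp only [Set.mem_setOf_eq] at *; rw [add_lie, ha, hb, add_zero]
          zero_mem' := by simp
          smul_mem' := fun c a ha => by
            simp only [Set.mem_setOf_eq] at *; rw [smul_lie, ha, smul_zero]
          lie_mem' := fun {a b} ha hb => by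
            simp only [Set.mem_setOf_eq] at *
            rw [lie_lie, hb, ha, lie_zero, lie_zero, sub_zero] }
      have hMC : M ≤ C := by
        rw [hM, LieSubalgebra.lieSpan_le]
        rintro _ ⟨z, rfl⟩
        exact key z
      exact hMC hy
    -- so ⟨g t, _⟩ is central in M, hence zero
    have : (⟨g t, hgM t⟩ : M) ∈ LieAlgebra.center R M := by
      rw [LieModule.mem_maxTrivSubmodule]
      intro x
      have := hcomm x x.2
      exact Subtype.ext this
    rw [hZ] at this
    simpa using congrArg Subtype.val this
  -- build δ by factoring g through m
  have hle : LinearMap.ker m ≤ LinearMap.ker g := fun t ht => hker t ht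
  let e : (L ⊗[R] L ⧸ LinearMap.ker m) ≃ₗ[R] L := m.quotKerEquivOfSurjective hsurj
  let δ : L →ₗ[R] L' := ((LinearMap.ker m).liftQ g hle).comp e.symm.toLinearMap
  refine ⟨δ, ?_⟩
  intro x n a b hx
  have hδ : ∀ t : L ⊗[R] L, δ (m t) = g t := by
    intro t
    have he : e.symm (m t) = Submodule.Quotient.mk t := by
      rw [LinearEquiv.symm_apply_eq]
      rfl
    simp only [δ, LinearMap.comp_apply, LinearEquiv.coe_toLinearMap, he]
    exact Submodule.liftQ_apply _ _ _
  have h1 : m (∑ i, a i ⊗ₜ[R] b i) = ∑ i, ⁅a i, b i⁆ := by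
    rw [map_sum]; simp [m, mbil]
  have h2 : g (∑ i, a i ⊗ₜ[R] b i) = ∑ i, ⁅f (a i), f (b i)⁆ := by
    rw [map_sum]; simp [g, gbil]
  rw [hx, ← h1, hδ, h2]
end

section
/- Let f : L → L' be a triple homomorphism with L perfect and the enveloping Lie algebra M of f(L) centerless, and let δ_f be the induced map with δ_f([x,y]) = [f x, f y]. Then f(ad x (z)) = [δ_f(x), f(z)] for all x, z ∈ L, i.e., f ∘ ad x = ad_{δ_f(x)} ∘ f. -/
/-- For a triple homomorphism `f` of a perfect Lie algebra with centerless enveloping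
algebra, `f ∘ ad x = ad (δ_f x) ∘ f`. -/
theorem f_ad_eq_ad_deltaF (R L L' : Type*) [CommRing R]
    [LieRing L] [LieAlgebra R L] [LieRing L'] [LieAlgebra R L']
    (f : L →ₗ[R] L')
    (hf : ∀ x y z : L, f ⁅x, ⁅y, z⁆⁆ = ⁅f x, ⁅f y, f z⁆⁆)
    (hperf : ⁅(⊤ : LieIdeal R L), (⊤ : LieIdeal R L)⁆ = ⊤)
    (hZ : LieAlgebra.center R ↥(LieSubalgebra.lieSpan R L' (Set.range f)) = ⊥)
    (δ : L →ₗ[R] L') (hδ : ∀ x y : L, δ ⁅x, y⁆ = ⁅f x, f y⁆) :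
    ∀ x z : L, f ⁅x, z⁆ = ⁅δ x, f z⁆ := by
  intro x z
  have hx : x ∈ (Submodule.span R {m : L | ∃ (a : (⊤ : LieIdeal R L)) (b : (⊤ : LieIdeal R L)),
      ⁅(a : L), (b : L)⁆ = m}) := by
    rw [← LieSubmodule.lieIdeal_oper_eq_linear_span, hperf]
    trivial
  induction hx using Submodule.span_induction with
  | mem m hm =>
    obtain ⟨⟨a, -⟩, ⟨b, -⟩, rfl⟩ := hm
    have h1 : f ⁅z, ⁅a, b⁆⁆ = ⁅f z, ⁅f a, f b⁆⁆ := hf z a b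
    have h2 : f ⁅⁅a, b⁆, z⁆ = -f ⁅z, ⁅a, b⁆⁆ := by
      rw [← map_neg, lie_skew]
    rw [h2, h1, hδ, ← lie_skew, neg_neg]
  | zero => simp
  | add u v _ _ hu hv => rw [add_lie, map_add, hu, hv, map_add, add_lie]
  | smul c u _ hu => rw [smul_lie, map_smul, hu, map_smul, smul_lie]
end

section
/- Let f : L → L' be a triple homomorphism with L perfect and the enveloping Lie algebra M of f(L) centerless. Then the induced map δ_f (determined by δ_f([x,y]) = [f x, f y]) is a Lie algebra homomorphism: δ_f([x,y]) = [δ_f(x), δ_f(y)] for all x, y ∈ L. -/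
/-- For a triple homomorphism `f` of a perfect Lie algebra with centerless enveloping
algebra, the induced map `δ_f` is a Lie algebra homomorphism. -/
theorem deltaF_isHom (R L L' : Type*) [CommRing R]
    [LieRing L] [LieAlgebra R L] [LieRing L'] [LieAlgebra R L']
    (f : L →ₗ[R] L')
    (hf : ∀ x y z : L, f ⁅x, ⁅y, z⁆⁆ = ⁅f x, ⁅f y, f z⁆⁆)
    (hperf : ⁅(⊤ : LieIdeal R L), (⊤ : LieIdeal R L)⁆ = ⊤)
    (hZ : LieAlgebra.center R ↥(LieSubalgebra.lieSpan R L' (Set.range f)) = ⊥)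
    (δ : L →ₗ[R] L') (hδ : ∀ x y : L, δ ⁅x, y⁆ = ⁅f x, f y⁆) :
    ∀ x y : L, δ ⁅x, y⁆ = ⁅δ x, δ y⁆ := by
  have hspan : Submodule.span R { m : L | ∃ x ∈ (⊤ : LieIdeal R L),
      ∃ n ∈ (⊤ : LieIdeal R L), ⁅x, n⁆ = m } = ⊤ := by
    rw [← LieSubmodule.lieIdeal_oper_eq_linear_span', hperf]
    rfl
  have hmem : ∀ w : L, w ∈ Submodule.span R { m : L | ∃ x ∈ (⊤ : LieIdeal R L),
      ∃ n ∈ (⊤ : LieIdeal R L), ⁅x, n⁆ = m } := by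
    intro w; rw [hspan]; trivial
  -- key fact: ⁅δ x, f z⁆ = f ⁅x, z⁆
  have key1 : ∀ x z : L, ⁅δ x, f z⁆ = f ⁅x, z⁆ := by
    intro x z
    induction hmem x using Submodule.span_induction with
    | mem w hw =>
      obtain ⟨u, -, v, -, rfl⟩ := hw
      rw [hδ, lie_lie, ← hf, ← hf, ← map_sub, ← lie_lie]
    | zero => simp
    | add a b _ _ ha hb => rw [map_add, add_lie, ha, hb, ← map_add, ← add_lie]
    | smul t a _ ha => rw [map_smul, smul_lie, ha, ← map_smul, ← smul_lie]
  intro x y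
  induction hmem y using Submodule.span_induction with
  | mem w hw =>
    obtain ⟨u, -, v, -, rfl⟩ := hw
    rw [hδ u v, leibniz_lie (δ x), key1, key1, ← hδ, ← hδ, ← map_add, ← leibniz_lie]
  | zero => simp
  | add a b _ _ ha hb => rw [lie_add, map_add, ha, hb, map_add, lie_add]
  | smul t a _ ha => rw [lie_smul, map_smul, ha, map_smul, lie_smul]
end

section
/- Let f : L → L' be a triple homomorphism with L perfect and the enveloping Lie algebra M of f(L) centerless, and δ_f the induced homomorphism. Then the images M⁺ = Im(f + δ_f) and M⁻ = Im(f − δ_f) generate ideals of M that commute: [f(x)+δ_f(x), f(y)−δ_f(y)] = 0 for all x, y ∈ L. -/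
/-- For a triple homomorphism `f` of a perfect Lie algebra with centerless enveloping
algebra, the ideals generated by `Im (f + δ_f)` and `Im (f - δ_f)` commute. -/
theorem images_commute (R L L' : Type*) [CommRing R]
    [LieRing L] [LieAlgebra R L] [LieRing L'] [LieAlgebra R L']
    (f : L →ₗ[R] L')
    (hf : ∀ x y z : L, f ⁅x, ⁅y, z⁆⁆ = ⁅f x, ⁅f y, f z⁆⁆)
    (hperf : ⁅(⊤ : LieIdeal R L), (⊤ : LieIdeal R L)⁆ = ⊤)
    (hZ : LieAlgebra.center R ↥(LieSubalgebra.lieSpan R L' (Set.range f)) = ⊥)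
    (δ : L →ₗ[R] L') (hδ : ∀ x y : L, δ ⁅x, y⁆ = ⁅f x, f y⁆) :
    ∀ x y : L, ⁅f x + δ x, f y - δ y⁆ = 0 := by
  -- induction principle from perfectness
  have hmem : ∀ w : L, w ∈ Submodule.span R
      {m : L | ∃ x ∈ (⊤ : LieIdeal R L), ∃ n ∈ (⊤ : LieIdeal R L), ⁅x, n⁆ = m} := by
    intro w
    rw [← LieSubmodule.lieIdeal_oper_eq_linear_span', hperf]
    simp
  have hind : ∀ p : L → Prop, p 0 → (∀ a b : L, p a → p b → p (a + b)) →
      (∀ (t : R) (a : L), p a → p (t • a)) → (∀ a b : L, p ⁅a, b⁆) → ∀ w, p w := by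
    intro p h0 hadd hsmul hbr w
    refine Submodule.span_induction (p := fun m _ => p m) ?_ h0
      (fun a b _ _ => hadd a b) (fun t a _ => hsmul t a) (hmem w)
    rintro m ⟨a, -, b, -, rfl⟩; exact hbr a b
  -- key identity (A): f ⁅x, w⁆ = ⁅f x, δ w⁆
  have keyA : ∀ x w : L, f ⁅x, w⁆ = ⁅f x, δ w⁆ := by
    intro x
    refine hind (fun w => f ⁅x, w⁆ = ⁅f x, δ w⁆) ?_ ?_ ?_ ?_
    · simp
    · intro a b ha hb; rw [lie_add, map_add, ha, hb, map_add, lie_add]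
    · intro t a ha; rw [lie_smul, map_smul, ha, map_smul, lie_smul]
    · intro a b; rw [hδ, hf]
  -- key identity (A'): ⁅δ a, f b⁆ = f ⁅a, b⁆
  have key2 : ∀ a b : L, ⁅δ a, f b⁆ = f ⁅a, b⁆ := by
    intro a b
    rw [← lie_skew, ← keyA b a, ← map_neg, lie_skew]
  set M := LieSubalgebra.lieSpan R L' (Set.range f) with hM
  have hfM : ∀ x, f x ∈ M := fun x => LieSubalgebra.subset_lieSpan ⟨x, rfl⟩
  have hδM : ∀ x, δ x ∈ M := by
    refine hind (fun x => δ x ∈ M) ?_ ?_ ?_ ?_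
    · simp
    · intro a b ha hb; rw [map_add]; exact M.add_mem ha hb
    · intro t a ha; rw [map_smul]; exact M.smul_mem t ha
    · intro a b; rw [hδ]; exact M.lie_mem (hfM a) (hfM b)
  intro x y
  set c : L' := ⁅f x, f y⁆ - ⁅δ x, δ y⁆ with hc
  have hcentral : ∀ z : L, ⁅c, f z⁆ = 0 := by
    intro z
    have h1 : ⁅⁅f x, f y⁆, f z⁆ = f ⁅⁅x, y⁆, z⁆ := by
      rw [← lie_skew, ← hf, ← map_neg, lie_skew]
    have h2 : ⁅⁅δ x, δ y⁆, f z⁆ = f ⁅⁅x, y⁆, z⁆ := by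
      have e1 : ⁅δ y, f z⁆ = f ⁅y, z⁆ := key2 y z
      have e2 : ⁅δ x, f z⁆ = f ⁅x, z⁆ := key2 x z
      rw [lie_lie, e1, e2, key2 x ⁅y, z⁆, key2 y ⁅x, z⁆, ← map_sub, ← lie_lie]
    rw [hc, sub_lie, h1, h2, sub_self]
  have hcM : c ∈ M := M.sub_mem (M.lie_mem (hfM x) (hfM y)) (M.lie_mem (hδM x) (hδM y))
  -- c commutes with all of M
  have hcent' : ∀ m ∈ M, ⁅c, m⁆ = 0 := by
    let S : LieSubalgebra R L' :=
      { carrier := {m | ⁅c, m⁆ = 0}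
        add_mem' := fun {a b} ha hb => by
          simp only [Set.mem_setOf_eq] at *; rw [lie_add, ha, hb, add_zero]
        zero_mem' := by simp
        smul_mem' := fun t m hm => by
          simp only [Set.mem_setOf_eq] at *; rw [lie_smul, hm, smul_zero]
        lie_mem' := fun {a b} ha hb => by
          simp only [Set.mem_setOf_eq] at *
          rw [leibniz_lie, ha, hb, zero_lie, lie_zero, add_zero] }
    have hle : M ≤ S := by
      rw [hM, LieSubalgebra.lieSpan_le]
      rintro _ ⟨z, rfl⟩; exact hcentral z
    exact fun m hm => hle hm
  -- so c is in the center of M, hence zero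
  have hc0 : c = 0 := by
    have hmemZ : (⟨c, hcM⟩ : M) ∈ LieAlgebra.center R ↥M := by
      rw [LieModule.mem_maxTrivSubmodule]
      intro n
      have hzn : ⁅(n : L'), c⁆ = 0 := by rw [← lie_skew, hcent' n n.2, neg_zero]
      ext
      simpa using hzn
    rw [hZ, LieSubmodule.mem_bot] at hmemZ
    simpa using congrArg Subtype.val hmemZ
  -- cross terms coincide
  have hcross : ⁅δ x, f y⁆ = ⁅f x, δ y⁆ := by rw [key2 x y, keyA x y]
  rw [add_lie, lie_sub, lie_sub, hcross, sub_add_sub_cancel]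
  rw [hc] at hc0
  exact hc0
end

section
/- Let R be a commutative ring containing 1/2, L a perfect Lie algebra over R, f : L → L' a triple homomorphism such that the enveloping Lie algebra M of f(L) is centerless and indecomposable (cannot be written as a direct sum of two nontrivial ideals). Then f is either a Lie algebra homomorphism or an anti-homomorphism. -/
/-- If `1/2 ∈ R`, `L` is perfect, and the enveloping Lie algebra `M` of the image of a triple
homomorphism `f` is centerless and indecomposable, then `f` is a homomorphism or an
anti-homomorphism. -/
theorem tripleHom_indecomposable (R L L' : Type*) [CommRing R]
    [LieRing L] [LieAlgebra R L] [LieRing L'] [LieAlgebra R L']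
    [Invertible (2 : R)]
    (f : L →ₗ[R] L')
    (hf : ∀ x y z : L, f ⁅x, ⁅y, z⁆⁆ = ⁅f x, ⁅f y, f z⁆⁆)
    (hperf : ⁅(⊤ : LieIdeal R L), (⊤ : LieIdeal R L)⁆ = ⊤)
    (hZ : LieAlgebra.center R ↥(LieSubalgebra.lieSpan R L' (Set.range f)) = ⊥)
    (hindec : ∀ I J : LieIdeal R ↥(LieSubalgebra.lieSpan R L' (Set.range f)),
      I ⊓ J = ⊥ → I ⊔ J = ⊤ → I = ⊥ ∨ J = ⊥) :
    (∀ x y : L, f ⁅x, y⁆ = ⁅f x, f y⁆) ∨ (∀ x y : L, f ⁅x, y⁆ = ⁅f y, f x⁆) := by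
  set M := LieSubalgebra.lieSpan R L' (Set.range f) with hMdef
  have fmem : ∀ x : L, f x ∈ M := fun x => LieSubalgebra.subset_lieSpan ⟨x, rfl⟩
  -- basic identity: f ⁅⁅x,y⁆,z⁆ = ⁅⁅f x, f y⁆, f z⁆
  have h1 : ∀ x y z : L, f ⁅⁅x, y⁆, z⁆ = ⁅⁅f x, f y⁆, f z⁆ := by
    intro x y z
    have e : (⁅⁅x, y⁆, z⁆ : L) = -⁅z, ⁅x, y⁆⁆ := (lie_skew _ _).symm
    rw [e, map_neg, hf, lie_skew]
  -- identity (B)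
  have hB : ∀ x y u v : L, ⁅f ⁅x, y⁆, ⁅f u, f v⁆⁆ = ⁅⁅f x, f y⁆, f ⁅u, v⁆⁆ := by
    intro x y u v
    rw [← hf, h1]
  -- identity (F)
  have hF : ∀ x y u v w : L,
      ⁅f ⁅x, y⁆, ⁅f ⁅u, v⁆, f w⁆⁆ = ⁅⁅f x, f y⁆, ⁅⁅f u, f v⁆, f w⁆⁆ := by
    intro x y u v w
    rw [← hf, h1, h1]
  -- centerlessness: an element of M commuting with all f w is zero
  have hcent : ∀ m : L', m ∈ M → (∀ w : L, ⁅m, f w⁆ = 0) → m = 0 := by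
    intro m hm h0
    have hall : ∀ n, n ∈ M → ⁅m, n⁆ = 0 := by
      let K : LieSubalgebra R L' :=
        { carrier := {n | ⁅m, n⁆ = 0}
          add_mem' := fun {a b} ha hb => by
            simp only [Set.mem_setOf_eq] at *
            rw [lie_add, ha, hb, add_zero]
          zero_mem' := by simp
          smul_mem' := fun c a ha => by
            simp only [Set.mem_setOf_eq] at *
            rw [lie_smul, ha, smul_zero]
          lie_mem' := fun {a b} ha hb => by
            simp only [Set.mem_setOf_eq] at *
            rw [leibniz_lie, ha, hb, zero_lie, lie_zero, add_zero] }
      have hK : M ≤ K := by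
        rw [hMdef, LieSubalgebra.lieSpan_le]
        rintro _ ⟨w, rfl⟩
        exact h0 w
      intro n hn
      exact hK hn
    have hc : (⟨m, hm⟩ : ↥M) ∈ LieAlgebra.center R ↥M := by
      rw [LieModule.mem_maxTrivSubmodule]
      intro y
      have : (↑(⁅y, (⟨m, hm⟩ : ↥M)⁆) : L') = 0 := by
        have : (↑(⁅y, (⟨m, hm⟩ : ↥M)⁆) : L') = ⁅(y : L'), m⁆ := rfl
        rw [this, ← lie_skew, hall _ y.2, neg_zero]
      exact Subtype.ext this
    rw [hZ, LieSubmodule.mem_bot] at hc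
    exact congrArg Subtype.val hc
  -- identity (G)
  have hG : ∀ x y u v : L, ⁅f ⁅x, y⁆, f ⁅u, v⁆⁆ = ⁅⁅f x, f y⁆, ⁅f u, f v⁆⁆ := by
    intro x y u v
    have hm : ⁅f ⁅x, y⁆, f ⁅u, v⁆⁆ - ⁅⁅f x, f y⁆, ⁅f u, f v⁆⁆ ∈ M :=
      sub_mem (M.lie_mem (fmem _) (fmem _))
        (M.lie_mem (M.lie_mem (fmem _) (fmem _)) (M.lie_mem (fmem _) (fmem _)))
    have h0 := hcent _ hm ?_
    · exact sub_eq_zero.mp h0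
    intro w
    rw [sub_lie, lie_lie, lie_lie, hF x y u v w, hF u v x y w]
    abel
  -- the generating sets
  set Dset : Set L' := {m | ∃ x y : L, m = f ⁅x, y⁆ - ⁅f x, f y⁆} with hDset
  set Sset : Set L' := {m | ∃ x y : L, m = f ⁅x, y⁆ + ⁅f x, f y⁆} with hSset
  set ID : Submodule R L' := Submodule.span R Dset with hID
  set JS : Submodule R L' := Submodule.span R Sset with hJS
  -- D and S brackets with f w stay in the generating sets
  have hDw : ∀ x y w : L, ⁅f w, f ⁅x, y⁆ - ⁅f x, f y⁆⁆ ∈ Dset := by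
    intro x y w
    refine ⟨⁅x, y⁆, w, ?_⟩
    rw [h1, lie_sub, ← lie_skew (f w) (f ⁅x, y⁆), ← lie_skew (f w) ⁅f x, f y⁆]
    abel
  have hSw : ∀ x y w : L, ⁅f w, f ⁅x, y⁆ + ⁅f x, f y⁆⁆ ∈ Sset := by
    intro x y w
    refine ⟨w, ⁅x, y⁆, ?_⟩
    have e : f ⁅w, ⁅x, y⁆⁆ = ⁅f w, ⁅f x, f y⁆⁆ := hf w x y
    rw [e, lie_add]
    abel
  -- generator orthogonality: ⁅D, S⁆ = 0
  have hT : ∀ x y u v : L,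
      ⁅f ⁅x, y⁆ - ⁅f x, f y⁆, f ⁅u, v⁆ + ⁅f u, f v⁆⁆ = 0 := by
    intro x y u v
    rw [sub_lie, lie_add, lie_add, hG x y u v, hB x y u v]
    abel
  -- ID is stable under bracketing by elements of M
  have hIDstab : ∀ m, m ∈ M → ∀ d ∈ ID, ⁅m, d⁆ ∈ ID := by
    let K : LieSubalgebra R L' :=
      { carrier := {m | ∀ d ∈ ID, ⁅m, d⁆ ∈ ID}
        add_mem' := fun {a b} ha hb d hd => by
          rw [add_lie]; exact ID.add_mem (ha d hd) (hb d hd)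
        zero_mem' := fun d hd => by rw [zero_lie]; exact ID.zero_mem
        smul_mem' := fun c a ha d hd => by
          rw [smul_lie]; exact ID.smul_mem c (ha d hd)
        lie_mem' := fun {a b} ha hb d hd => by
          rw [lie_lie]
          exact ID.sub_mem (ha _ (hb d hd)) (hb _ (ha d hd)) }
    have hK : M ≤ K := by
      rw [hMdef, LieSubalgebra.lieSpan_le]
      rintro _ ⟨w, rfl⟩
      intro d hd
      induction hd using Submodule.span_induction with
      | mem d hdmem =>
        obtain ⟨x, y, rfl⟩ := hdmem
        exact Submodule.subset_span (hDw x y w)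
      | zero => rw [lie_zero]; exact ID.zero_mem
      | add a b _ _ ha hb => rw [lie_add]; exact ID.add_mem ha hb
      | smul c a _ ha => rw [lie_smul]; exact ID.smul_mem c ha
    exact fun m hm => hK hm
  have hJSstab : ∀ m, m ∈ M → ∀ s ∈ JS, ⁅m, s⁆ ∈ JS := by
    let K : LieSubalgebra R L' :=
      { carrier := {m | ∀ d ∈ JS, ⁅m, d⁆ ∈ JS}
        add_mem' := fun {a b} ha hb d hd => by
          rw [add_lie]; exact JS.add_mem (ha d hd) (hb d hd)
        zero_mem' := fun d hd => by rw [zero_lie]; exact JS.zero_mem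
        smul_mem' := fun c a ha d hd => by
          rw [smul_lie]; exact JS.smul_mem c (ha d hd)
        lie_mem' := fun {a b} ha hb d hd => by
          rw [lie_lie]
          exact JS.sub_mem (ha _ (hb d hd)) (hb _ (ha d hd)) }
    have hK : M ≤ K := by
      rw [hMdef, LieSubalgebra.lieSpan_le]
      rintro _ ⟨w, rfl⟩
      intro d hd
      induction hd using Submodule.span_induction with
      | mem d hdmem =>
        obtain ⟨x, y, rfl⟩ := hdmem
        exact Submodule.subset_span (hSw x y w)
      | zero => rw [lie_zero]; exact JS.zero_mem
      | add a b _ _ ha hb => rw [lie_add]; exact JS.add_mem ha hb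
      | smul c a _ ha => rw [lie_smul]; exact JS.smul_mem c ha
    exact fun m hm => hK hm
  -- ID and JS sit inside M
  have hIDM : ∀ d ∈ ID, d ∈ M := by
    intro d hd
    induction hd using Submodule.span_induction with
    | mem d hdmem =>
      obtain ⟨x, y, rfl⟩ := hdmem
      exact sub_mem (fmem _) (M.lie_mem (fmem _) (fmem _))
    | zero => exact zero_mem M
    | add a b _ _ ha hb => exact add_mem ha hb
    | smul c a _ ha => exact M.smul_mem c ha
  have hJSM : ∀ s ∈ JS, s ∈ M := by
    intro s hs
    induction hs using Submodule.span_induction with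
    | mem s hsmem =>
      obtain ⟨x, y, rfl⟩ := hsmem
      exact add_mem (fmem _) (M.lie_mem (fmem _) (fmem _))
    | zero => exact zero_mem M
    | add a b _ _ ha hb => exact add_mem ha hb
    | smul c a _ ha => exact M.smul_mem c ha
  -- orthogonality of spans
  have hDS0 : ∀ d ∈ ID, ∀ s ∈ JS, ⁅d, s⁆ = 0 := by
    intro d hd
    induction hd using Submodule.span_induction with
    | mem d hdmem =>
      obtain ⟨x, y, rfl⟩ := hdmem
      intro s hs
      induction hs using Submodule.span_induction with
      | mem s hsmem =>
        obtain ⟨u, v, rfl⟩ := hsmem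
        exact hT x y u v
      | zero => exact lie_zero _
      | add a b _ _ ha hb => rw [lie_add, ha, hb, add_zero]
      | smul c a _ ha => rw [lie_smul, ha, smul_zero]
    | zero => intro s hs; exact zero_lie _
    | add a b _ _ ha hb => intro s hs; rw [add_lie, ha s hs, hb s hs, add_zero]
    | smul c a _ ha => intro s hs; rw [smul_lie, ha s hs, smul_zero]
  -- every element of M lies in ID ⊔ JS
  have hsup : ∀ m, m ∈ M → m ∈ ID ⊔ JS := by
    let K : LieSubalgebra R L' :=
      { carrier := ((ID ⊔ JS : Submodule R L') : Set L')
        add_mem' := fun {a b} ha hb => (ID ⊔ JS).add_mem ha hb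
        zero_mem' := (ID ⊔ JS).zero_mem
        smul_mem' := fun c a ha => (ID ⊔ JS).smul_mem c ha
        lie_mem' := fun {a b} ha hb => by
          obtain ⟨d1, hd1, s1, hs1, rfl⟩ := Submodule.mem_sup.mp ha
          obtain ⟨d2, hd2, s2, hs2, rfl⟩ := Submodule.mem_sup.mp hb
          rw [add_lie, lie_add, lie_add]
          have t1 : ⁅d1, d2⁆ ∈ ID := hIDstab d1 (hIDM d1 hd1) d2 hd2
          have t2 : ⁅d1, s2⁆ = 0 := hDS0 d1 hd1 s2 hs2
          have t3 : ⁅s1, d2⁆ = 0 := by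
            rw [← lie_skew, hDS0 d2 hd2 s1 hs1, neg_zero]
          have t4 : ⁅s1, s2⁆ ∈ JS := hJSstab s1 (hJSM s1 hs1) s2 hs2
          rw [t2, t3]
          exact Submodule.add_mem _
            (Submodule.add_mem _ (Submodule.mem_sup_left t1) (Submodule.zero_mem _))
            (Submodule.add_mem _ (Submodule.zero_mem _) (Submodule.mem_sup_right t4)) }
    have hK : M ≤ K := by
      rw [hMdef, LieSubalgebra.lieSpan_le]
      rintro _ ⟨z, rfl⟩
      -- use perfectness : z ∈ ⁅⊤, ⊤⁆
      have hz : z ∈ Submodule.span R {m : L | ∃ x ∈ (⊤ : LieIdeal R L), ∃ n ∈ (⊤ : LieIdeal R L), ⁅x, n⁆ = m} := by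
        rw [← LieSubmodule.lieIdeal_oper_eq_linear_span', hperf]
        exact LieSubmodule.mem_top z
      have : f z ∈ ID ⊔ JS := by
        induction hz using Submodule.span_induction with
        | mem a hamem =>
          obtain ⟨x, -, y, -, rfl⟩ := hamem
          have key : f ⁅x, y⁆ =
              (⅟(2 : R)) • ((f ⁅x, y⁆ - ⁅f x, f y⁆) + (f ⁅x, y⁆ + ⁅f x, f y⁆)) := by
            have e : (f ⁅x, y⁆ - ⁅f x, f y⁆) + (f ⁅x, y⁆ + ⁅f x, f y⁆)
                = (2 : R) • f ⁅x, y⁆ := by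
              rw [two_smul]; abel
            rw [e, invOf_smul_smul]
          rw [key]
          exact Submodule.smul_mem _ _ (Submodule.add_mem _
            (Submodule.mem_sup_left (Submodule.subset_span ⟨x, y, rfl⟩))
            (Submodule.mem_sup_right (Submodule.subset_span ⟨x, y, rfl⟩)))
        | zero => rw [map_zero]; exact Submodule.zero_mem _
        | add a b _ _ ha hb => rw [map_add]; exact Submodule.add_mem _ ha hb
        | smul c a _ ha => rw [map_smul]; exact Submodule.smul_mem _ c ha
      exact this
    exact fun m hm => hK hm
  -- the two ideals of ↥M
  let Ibar : LieIdeal R ↥M :=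
    { carrier := {m : ↥M | (m : L') ∈ ID}
      add_mem' := fun {a b} ha hb => by
        simp only [Set.mem_setOf_eq] at *
        exact ID.add_mem ha hb
      zero_mem' := by simp only [Set.mem_setOf_eq]; exact ID.zero_mem
      smul_mem' := fun c a ha => by
        simp only [Set.mem_setOf_eq] at *
        exact ID.smul_mem c ha
      lie_mem := fun {x m} hm => by
        simp only [Set.mem_setOf_eq] at *
        exact hIDstab (x : L') x.2 (m : L') hm }
  let Jbar : LieIdeal R ↥M :=
    { carrier := {m : ↥M | (m : L') ∈ JS}
      add_mem' := fun {a b} ha hb => by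
        simp only [Set.mem_setOf_eq] at *
        exact JS.add_mem ha hb
      zero_mem' := by simp only [Set.mem_setOf_eq]; exact JS.zero_mem
      smul_mem' := fun c a ha => by
        simp only [Set.mem_setOf_eq] at *
        exact JS.smul_mem c ha
      lie_mem := fun {x m} hm => by
        simp only [Set.mem_setOf_eq] at *
        exact hJSstab (x : L') x.2 (m : L') hm }
  have hIbarMem : ∀ m : ↥M, m ∈ Ibar ↔ (m : L') ∈ ID := fun m => Iff.rfl
  have hJbarMem : ∀ m : ↥M, m ∈ Jbar ↔ (m : L') ∈ JS := fun m => Iff.rfl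
  -- Ibar ⊓ Jbar = ⊥
  have hbot : Ibar ⊓ Jbar = ⊥ := by
    rw [eq_bot_iff]
    intro m hm
    rw [LieSubmodule.mem_inf] at hm
    obtain ⟨hmI, hmJ⟩ := hm
    have hmI' : (m : L') ∈ ID := hmI
    have hmJ' : (m : L') ∈ JS := hmJ
    have hm0 : (m : L') = 0 := by
      apply hcent _ m.2
      intro w
      obtain ⟨d, hd, s, hs, he⟩ := Submodule.mem_sup.mp (hsup (f w) (fmem w))
      rw [← he, lie_add]
      have t1 : ⁅(m : L'), d⁆ = 0 := by
        rw [← lie_skew, hDS0 d hd _ hmJ', neg_zero]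
      have t2 : ⁅(m : L'), s⁆ = 0 := hDS0 _ hmI' s hs
      rw [t1, t2, add_zero]
    rw [LieSubmodule.mem_bot]
    exact Subtype.ext hm0
  -- Ibar ⊔ Jbar = ⊤
  have htop : Ibar ⊔ Jbar = ⊤ := by
    rw [eq_top_iff]
    intro m _
    obtain ⟨d, hd, s, hs, he⟩ := Submodule.mem_sup.mp (hsup (m : L') m.2)
    rw [LieSubmodule.mem_sup]
    refine ⟨⟨d, hIDM d hd⟩, hd, ⟨s, hJSM s hs⟩, hs, ?_⟩
    exact Subtype.ext he
  rcases hindec Ibar Jbar hbot htop with h | h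
  · left
    intro x y
    have hmem : (⟨f ⁅x, y⁆ - ⁅f x, f y⁆, hIDM _ (Submodule.subset_span ⟨x, y, rfl⟩)⟩ : ↥M) ∈ Ibar :=
      Submodule.subset_span ⟨x, y, rfl⟩
    rw [h, LieSubmodule.mem_bot] at hmem
    have := congrArg Subtype.val hmem
    simpa [sub_eq_zero] using this
  · right
    intro x y
    have hmem : (⟨f ⁅x, y⁆ + ⁅f x, f y⁆, hJSM _ (Submodule.subset_span ⟨x, y, rfl⟩)⟩ : ↥M) ∈ Jbar :=
      Submodule.subset_span ⟨x, y, rfl⟩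
    rw [h, LieSubmodule.mem_bot] at hmem
    have := congrArg Subtype.val hmem
    have h0 : f ⁅x, y⁆ + ⁅f x, f y⁆ = 0 := this
    calc f ⁅x, y⁆ = -⁅f x, f y⁆ := eq_neg_of_add_eq_zero_left h0
      _ = ⁅f y, f x⁆ := lie_skew _ _
end

section
/- Let R be a commutative ring in which 2 is invertible, L a perfect Lie algebra over R, and f : L → L' a triple homomorphism whose enveloping Lie algebra M of f(L) is centerless and decomposes as a direct sum of indecomposable ideals. Then f = f₁ + f₂ where f₁ is a Lie algebra homomorphism, f₂ is an anti-homomorphism, f₁(L) and f₂(L) lie in ideals of M with trivial intersection (i.e., f is either a homomorphism, an anti-homomorphism, or a direct sum of a homomorphism and an anti-homomorphism). -/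
/-- If `2` is invertible in `R`, `L` is perfect, and the enveloping Lie algebra `M` of the
image of a triple homomorphism `f` is centerless and decomposes as a direct sum of
indecomposable ideals, then `f` is the direct sum of a homomorphism and an
anti-homomorphism. -/
theorem tripleHom_decomposition (R L L' : Type*) [CommRing R]
    [LieRing L] [LieAlgebra R L] [LieRing L'] [LieAlgebra R L']
    [Invertible (2 : R)]
    (f : L →ₗ[R] L')
    (hf : ∀ x y z : L, f ⁅x, ⁅y, z⁆⁆ = ⁅f x, ⁅f y, f z⁆⁆)
    (hperf : ⁅(⊤ : LieIdeal R L), (⊤ : LieIdeal R L)⁆ = ⊤)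
    (hZ : LieAlgebra.center R ↥(LieSubalgebra.lieSpan R L' (Set.range f)) = ⊥)
    (hdec : ∃ (s : ℕ) (M' : Fin s → LieIdeal R ↥(LieSubalgebra.lieSpan R L' (Set.range f))),
      iSupIndep M' ∧ (⨆ i, M' i) = ⊤ ∧
      ∀ i, ∀ I J : LieIdeal R ↥(M' i), I ⊓ J = ⊥ → I ⊔ J = ⊤ → I = ⊥ ∨ J = ⊥) :
    ∃ (f₁ f₂ : L →ₗ[R] L')
      (I₁ I₂ : LieIdeal R ↥(LieSubalgebra.lieSpan R L' (Set.range f))),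
      f = f₁ + f₂ ∧
      (∀ x y : L, f₁ ⁅x, y⁆ = ⁅f₁ x, f₁ y⁆) ∧
      (∀ x y : L, f₂ ⁅x, y⁆ = ⁅f₂ y, f₂ x⁆) ∧
      I₁ ⊓ I₂ = ⊥ ∧
      (∀ x : L, ∃ h : f₁ x ∈ LieSubalgebra.lieSpan R L' (Set.range f),
        (⟨f₁ x, h⟩ : ↥(LieSubalgebra.lieSpan R L' (Set.range f))) ∈ I₁) ∧
      (∀ x : L, ∃ h : f₂ x ∈ LieSubalgebra.lieSpan R L' (Set.range f),
        (⟨f₂ x, h⟩ : ↥(LieSubalgebra.lieSpan R L' (Set.range f))) ∈ I₂) := by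
  classical
  clear hdec
  set MM := LieSubalgebra.lieSpan R L' (Set.range f) with hMM
  have hfM : ∀ x : L, f x ∈ MM := fun x => LieSubalgebra.subset_lieSpan ⟨x, rfl⟩
  -- Any element of `MM` commuting with every `f x` is zero.
  have hcent : ∀ m : L', m ∈ MM → (∀ x : L, ⁅m, f x⁆ = 0) → m = 0 := by
    intro m hm h
    let S : LieSubalgebra R L' :=
      { carrier := {n | ⁅m, n⁆ = 0}
        add_mem' := fun {a b} ha hb => by
          simp only [Set.mem_setOf_eq] at ha hb ⊢; rw [lie_add, ha, hb, add_zero]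
        zero_mem' := by simp
        smul_mem' := fun c a ha => by
          simp only [Set.mem_setOf_eq] at ha ⊢; rw [lie_smul, ha, smul_zero]
        lie_mem' := fun {a b} ha hb => by
          simp only [Set.mem_setOf_eq] at ha hb ⊢
          rw [leibniz_lie, ha, hb, zero_lie, lie_zero, add_zero] }
    have hS : MM ≤ S := LieSubalgebra.lieSpan_le.mpr (by rintro _ ⟨x, rfl⟩; exact h x)
    have hmem : (⟨m, hm⟩ : MM) ∈ LieAlgebra.center R MM := by
      rw [LieModule.mem_maxTrivSubmodule]
      intro n
      have hn : ⁅m, (n : L')⁆ = 0 := hS n.2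
      refine Subtype.ext ?_
      change ⁅(n : L'), m⁆ = 0
      rw [← lie_skew, hn, neg_zero]
    rw [hZ] at hmem
    exact congrArg Subtype.val ((LieSubmodule.mem_bot _).mp hmem)
  have huniq : ∀ (u : L) (m m' : L'), m ∈ MM → m' ∈ MM →
      (∀ z, ⁅m, f z⁆ = f ⁅u, z⁆) → (∀ z, ⁅m', f z⁆ = f ⁅u, z⁆) → m = m' := by
    intro u m m' hm hm' h1 h2
    have h0 : m - m' = 0 :=
      hcent _ (sub_mem hm hm') fun z => by rw [sub_lie, h1, h2, sub_self]
    exact sub_eq_zero.mp h0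
  have hbr : ∀ x y z : L, ⁅⁅f x, f y⁆, f z⁆ = f ⁅⁅x, y⁆, z⁆ := by
    intro x y z
    calc ⁅⁅f x, f y⁆, f z⁆ = -⁅f z, ⁅f x, f y⁆⁆ := (lie_skew _ _).symm
      _ = -f ⁅z, ⁅x, y⁆⁆ := by rw [hf z x y]
      _ = f ⁅⁅x, y⁆, z⁆ := by rw [← map_neg, lie_skew]
  have hex : ∀ u : L, ∃ m : L', m ∈ MM ∧ ∀ z, ⁅m, f z⁆ = f ⁅u, z⁆ := by
    intro u
    have hsub : (⊤ : Submodule R L) ≤ Submodule.span R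
        {m : L | ∃ (x : (⊤ : LieIdeal R L)) (n : (⊤ : LieIdeal R L)), ⁅(x : L), (n : L)⁆ = m} := by
      rw [← LieSubmodule.lieIdeal_oper_eq_linear_span, hperf, LieSubmodule.top_toSubmodule]
    have hu : u ∈ Submodule.span R
        {m : L | ∃ (x : (⊤ : LieIdeal R L)) (n : (⊤ : LieIdeal R L)), ⁅(x : L), (n : L)⁆ = m} :=
      hsub Submodule.mem_top
    refine Submodule.span_induction
      (p := fun u _ => ∃ m : L', m ∈ MM ∧ ∀ z, ⁅m, f z⁆ = f ⁅u, z⁆) ?_ ?_ ?_ ?_ hu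
    · rintro _ ⟨⟨x, -⟩, ⟨y, -⟩, rfl⟩
      exact ⟨⁅f x, f y⁆, MM.lie_mem (hfM x) (hfM y), fun z => hbr x y z⟩
    · exact ⟨0, MM.zero_mem, fun z => by simp⟩
    · rintro a b _ _ ⟨m1, hm1, h1⟩ ⟨m2, hm2, h2⟩
      exact ⟨m1 + m2, MM.add_mem hm1 hm2,
        fun z => by rw [add_lie, h1, h2, ← map_add, ← add_lie]⟩
    · rintro c a _ ⟨m1, hm1, h1⟩
      exact ⟨c • m1, MM.smul_mem c hm1,
        fun z => by rw [smul_lie, h1, ← map_smul, ← smul_lie]⟩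
  choose g hg1 hg2 using hex
  have gadd : ∀ u v, g (u + v) = g u + g v := by
    intro u v
    exact huniq (u + v) _ _ (hg1 _) (MM.add_mem (hg1 u) (hg1 v)) (hg2 _)
      (fun z => by rw [add_lie, hg2, hg2, ← map_add, ← add_lie])
  have gsmul : ∀ (c : R) (u : L), g (c • u) = c • g u := by
    intro c u
    exact huniq (c • u) _ _ (hg1 _) (MM.smul_mem c (hg1 u)) (hg2 _)
      (fun z => by rw [smul_lie, hg2, ← map_smul, ← smul_lie])
  let G : L →ₗ[R] L' :=
    { toFun := g
      map_add' := gadd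
      map_smul' := gsmul }
  have gbr : ∀ x y : L, g ⁅x, y⁆ = ⁅f x, f y⁆ := fun x y =>
    huniq ⁅x, y⁆ _ _ (hg1 _) (MM.lie_mem (hfM x) (hfM y)) (hg2 _) (hbr x y)
  have fg : ∀ x y : L, ⁅f x, g y⁆ = f ⁅x, y⁆ := by
    intro x y
    rw [← lie_skew, hg2 y x, ← map_neg, lie_skew]
  have gg : ∀ x y : L, ⁅g x, g y⁆ = ⁅f x, f y⁆ := by
    intro x y
    refine huniq ⁅x, y⁆ _ _ (MM.lie_mem (hg1 x) (hg1 y)) (MM.lie_mem (hfM x) (hfM y))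
      ?_ (hbr x y)
    intro z
    rw [lie_lie, hg2 y z, hg2 x z, hg2 x ⁅y, z⁆, hg2 y ⁅x, z⁆, ← map_sub, ← lie_lie]
  let p : L →ₗ[R] L' := ⅟(2:R) • (f + G)
  let q : L →ₗ[R] L' := ⅟(2:R) • (f - G)
  have hpx : ∀ x, p x = ⅟(2:R) • (f x + g x) := fun x => rfl
  have hqx : ∀ x, q x = ⅟(2:R) • (f x - g x) := fun x => rfl
  have halve : ∀ v : L', ⅟(2:R) • ((2:R) • v) = v := fun v => by
    rw [smul_smul, invOf_mul_self, one_smul]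
  have hsum : f = p + q := by
    ext x
    have key : (f x + g x) + (f x - g x) = (2:R) • f x := by rw [two_smul]; abel
    rw [LinearMap.add_apply, hpx, hqx, ← smul_add, key, halve]
  have hfpq : ∀ x, f x = p x + q x := fun x => by rw [hsum]; rfl
  have hppy : ∀ x y : L, ⁅p x, p y⁆ = p ⁅x, y⁆ := by
    intro x y
    have key : ⁅f x + g x, f y + g y⁆ = (2:R) • (f ⁅x, y⁆ + ⁅f x, f y⁆) := by
      simp only [lie_add, add_lie, fg, hg2, gg, two_smul]
      abel
    rw [hpx, hpx, hpx, smul_lie, lie_smul, smul_smul, key, smul_smul, mul_assoc,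
      invOf_mul_self, mul_one, gbr]
  have hqq : ∀ x y : L, ⁅q y, q x⁆ = q ⁅x, y⁆ := by
    intro x y
    have key : ⁅f y - g y, f x - g x⁆ = (2:R) • (f ⁅x, y⁆ - ⁅f x, f y⁆) := by
      simp only [lie_sub, sub_lie, fg, hg2, gg, two_smul, ← lie_skew (f x) (f y),
        ← lie_skew x y, map_neg]
      abel
    rw [hqx, hqx, hqx, smul_lie, lie_smul, smul_smul, key, smul_smul, mul_assoc,
      invOf_mul_self, mul_one, gbr]
  have orth : ∀ x y : L, ⁅p x, q y⁆ = 0 := by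
    intro x y
    have key : ⁅f x + g x, f y - g y⁆ = 0 := by
      simp only [lie_sub, add_lie, fg, hg2, gg]
      abel
    rw [hpx, hqx, smul_lie, lie_smul, smul_smul, key, smul_zero]
  have orth' : ∀ x y : L, ⁅q x, p y⁆ = 0 := by
    intro x y
    rw [← lie_skew, orth y x, neg_zero]
  have hpM : ∀ x, p x ∈ MM := fun x => by
    rw [hpx]; exact MM.smul_mem _ (MM.add_mem (hfM x) (hg1 x))
  have hqM : ∀ x, q x ∈ MM := fun x => by
    rw [hqx]; exact MM.smul_mem _ (MM.sub_mem (hfM x) (hg1 x))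
  -- a generic "range is an ideal" argument
  have hidl : ∀ r : L →ₗ[R] L', (∀ x y : L, ∃ w, r w = ⁅f x, r y⁆) →
      ∀ m ∈ MM, ∀ y, ∃ w, ⁅m, r y⁆ = r w := by
    intro r hgen
    let C : LieSubalgebra R L' :=
      { carrier := {n | ∀ y, ∃ w, ⁅n, r y⁆ = r w}
        add_mem' := fun {a b} ha hb y => by
          obtain ⟨w1, h1⟩ := ha y; obtain ⟨w2, h2⟩ := hb y
          exact ⟨w1 + w2, by rw [add_lie, h1, h2, map_add]⟩
        zero_mem' := fun y => ⟨0, by simp⟩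
        smul_mem' := fun c a ha y => by
          obtain ⟨w, h1⟩ := ha y
          exact ⟨c • w, by rw [smul_lie, h1, map_smul]⟩
        lie_mem' := fun {a b} ha hb y => by
          obtain ⟨w1, h1⟩ := hb y
          obtain ⟨w2, h2⟩ := ha w1
          obtain ⟨w3, h3⟩ := ha y
          obtain ⟨w4, h4⟩ := hb w3
          exact ⟨w2 - w4, by rw [lie_lie, h1, h2, h3, h4, map_sub]⟩ }
    have hC : MM ≤ C := LieSubalgebra.lieSpan_le.mpr
      (by rintro _ ⟨x, rfl⟩ y; exact (hgen x y).imp fun w hw => hw.symm)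
    intro m hm y
    exact hC hm y
  have hgenp : ∀ x y : L, ∃ w, p w = ⁅f x, p y⁆ := by
    intro x y
    exact ⟨⁅x, y⁆, by rw [hfpq x, add_lie, orth' x y, add_zero, hppy]⟩
  have hgenq : ∀ x y : L, ∃ w, q w = ⁅f x, q y⁆ := by
    intro x y
    exact ⟨⁅y, x⁆, by rw [hfpq x, add_lie, orth x y, zero_add, hqq]⟩
  let pM : L →ₗ[R] MM :=
    { toFun := fun x => ⟨p x, hpM x⟩
      map_add' := fun a b => Subtype.ext (p.map_add a b)
      map_smul' := fun c a => Subtype.ext (p.map_smul c a) }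
  let qM : L →ₗ[R] MM :=
    { toFun := fun x => ⟨q x, hqM x⟩
      map_add' := fun a b => Subtype.ext (q.map_add a b)
      map_smul' := fun c a => Subtype.ext (q.map_smul c a) }
  let I₁ : LieIdeal R MM :=
    { toSubmodule := LinearMap.range pM
      lie_mem := by
        rintro x m hm
        obtain ⟨y, rfl⟩ := hm
        obtain ⟨w, hw⟩ := hidl p hgenp x.1 x.2 y
        exact ⟨w, Subtype.ext hw.symm⟩ }
  let I₂ : LieIdeal R MM :=
    { toSubmodule := LinearMap.range qM
      lie_mem := by
        rintro x m hm
        obtain ⟨y, rfl⟩ := hm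
        obtain ⟨w, hw⟩ := hidl q hgenq x.1 x.2 y
        exact ⟨w, Subtype.ext hw.symm⟩ }
  have hinter : I₁ ⊓ I₂ = ⊥ := by
    rw [LieSubmodule.eq_bot_iff]
    intro m hm
    rw [LieSubmodule.mem_inf] at hm
    obtain ⟨⟨a, ha⟩, ⟨b, hb⟩⟩ := hm
    have h1 : (m : L') = p a := congrArg Subtype.val ha.symm
    have h2 : (m : L') = q b := congrArg Subtype.val hb.symm
    have hm0 : (m : L') = 0 := by
      apply hcent _ m.2
      intro x
      have e1 : ⁅(m : L'), p x⁆ = 0 := by rw [h2]; exact orth' b x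
      have e2 : ⁅(m : L'), q x⁆ = 0 := by rw [h1]; exact orth a x
      rw [hfpq x, lie_add, e1, e2, add_zero]
    exact Subtype.ext hm0
  exact ⟨p, q, I₁, I₂, hsum, fun x y => (hppy x y).symm, fun x y => (hqq x y).symm,
    hinter, fun x => ⟨hpM x, ⟨x, rfl⟩⟩, fun x => ⟨hqM x, ⟨x, rfl⟩⟩⟩
end
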